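/- arXiv:2407.08191 — 2 statements merged into one kernel-verified Lean document; each statement's English description precedes it below -/
import Mathlib

section
/- As N → ∞, ∑_{n=1}^{N²} τ_N(n)² = (12/π²)·N²·log N + O(N²), where τ_N(n) = #{(a,b) ∈ ℤ² : ab = n, 1 ≤ a,b ≤ N}. -/
open Finset Filter

/-- The restricted divisor function `τ_N(n) = #{(a,b) : ab = n, 1 ≤ a,b ≤ N}`. -/
def tauN (N n : ℕ) : ℕ :=
  ((Finset.Icc 1 N ×ˢ Finset.Icc 1 N).filter fun p => p.1 * p.2 = n).card

section Aux
open ArithmeticFunction ArithmeticFunction.Moebius Real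



lemma sum_sq_eq_quad (N : ℕ) :
    ∑ n ∈ Icc 1 (N^2), tauN N n ^ 2 =
    (((Icc 1 N ×ˢ Icc 1 N) ×ˢ (Icc 1 N ×ˢ Icc 1 N)).filter
      (fun q : (ℕ×ℕ)×(ℕ×ℕ) => q.1.1*q.1.2 = q.2.1*q.2.2)).card := by
  rw [Finset.card_eq_sum_card_fiberwise
    (f := fun q : (ℕ×ℕ)×(ℕ×ℕ) => q.1.1*q.1.2) (t := Icc 1 (N^2)) ?_]
  · apply Finset.sum_congr rfl
    intro n _
    rw [Finset.filter_filter]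
    have hsplit : (((Icc 1 N ×ˢ Icc 1 N) ×ˢ (Icc 1 N ×ˢ Icc 1 N)).filter
        (fun q : (ℕ×ℕ)×(ℕ×ℕ) => (q.1.1*q.1.2 = q.2.1*q.2.2) ∧ q.1.1*q.1.2 = n))
        = ((Icc 1 N ×ˢ Icc 1 N).filter (fun p : ℕ×ℕ => p.1*p.2 = n)) ×ˢ
          ((Icc 1 N ×ˢ Icc 1 N).filter (fun p : ℕ×ℕ => p.1*p.2 = n)) := by
      ext q
      simp only [Finset.mem_filter, Finset.mem_product]
      constructor
      · rintro ⟨⟨h1, h2⟩, heq, hn⟩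
        exact ⟨⟨h1, hn⟩, h2, by rw [← heq]; exact hn⟩
      · rintro ⟨⟨h1, hn1⟩, h2, hn2⟩
        exact ⟨⟨h1, h2⟩, by rw [hn1, hn2], hn1⟩
    rw [hsplit, Finset.card_product, tauN, sq]
  · rintro ⟨⟨a, b⟩, ⟨c, d⟩⟩ hq
    change ((a, b), c, d) ∈ ((Icc 1 N ×ˢ Icc 1 N) ×ˢ (Icc 1 N ×ˢ Icc 1 N)).filter
      (fun q : (ℕ×ℕ)×(ℕ×ℕ) => q.1.1*q.1.2 = q.2.1*q.2.2) at hq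
    simp only [Finset.mem_coe, Finset.mem_filter, Finset.mem_product, Finset.mem_Icc] at hq ⊢
    obtain ⟨⟨⟨ha, hb⟩, hc, hd⟩, _⟩ := hq
    constructor
    · exact Nat.one_le_iff_ne_zero.2 (Nat.mul_ne_zero (by omega) (by omega))
    · calc a * b ≤ N * N := Nat.mul_le_mul ha.2 hb.2
        _ = N^2 := (sq N).symm

lemma core {a b c d : ℕ} (ha : 0 < a) (hb : 0 < b) (hc : 0 < c) (h : a * b = c * d) :
    a = Nat.gcd a c * (a / Nat.gcd a c) ∧ c = Nat.gcd a c * (c / Nat.gcd a c) ∧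
    b = Nat.gcd b d * (c / Nat.gcd a c) ∧ d = Nat.gcd b d * (a / Nat.gcd a c) := by
  set g := Nat.gcd a c with hg
  have hgpos : 0 < g := Nat.gcd_pos_of_pos_left c ha
  set s := a / g with hs
  set t := c / g with ht
  have hag : a = g * s := (Nat.mul_div_cancel' (Nat.gcd_dvd_left a c)).symm
  have hcg : c = g * t := (Nat.mul_div_cancel' (Nat.gcd_dvd_right a c)).symm
  have cop : Nat.Coprime s t := Nat.coprime_div_gcd_div_gcd hgpos
  have htpos : 0 < t := Nat.div_pos (Nat.le_of_dvd hc (Nat.gcd_dvd_right a c)) hgpos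
  have hst : s * b = t * d := by
    apply Nat.eq_of_mul_eq_mul_left hgpos
    calc g * (s * b) = (g * s) * b := by ring
      _ = (g * t) * d := by rw [← hag, ← hcg]; exact h
      _ = g * (t * d) := by ring
  have htb : t ∣ b := by
    apply (cop.symm).dvd_of_dvd_mul_left
    exact ⟨d, hst⟩
  obtain ⟨k, hk⟩ := htb
  have hd' : d = s * k := by
    apply Nat.eq_of_mul_eq_mul_left htpos
    calc t * d = s * b := hst.symm
      _ = s * (t * k) := by rw [hk]
      _ = t * (s * k) := by ring
  have hgcdbd : Nat.gcd b d = k := by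
    rw [hk, hd', show t * k = k * t by ring, show s * k = k * s by ring,
      Nat.gcd_mul_left]
    rw [Nat.Coprime] at cop
    rw [Nat.gcd_comm t s, cop, mul_one]
  exact ⟨hag, hcg, by rw [hgcdbd, hk]; ring, by rw [hgcdbd, hd']; ring⟩

lemma fiber_card (N s t : ℕ) (hs1 : 1 ≤ s) (hsN : s ≤ N) (ht1 : 1 ≤ t) (htN : t ≤ N)
    (cop : Nat.Coprime s t) :
    ((((Icc 1 N ×ˢ Icc 1 N) ×ˢ (Icc 1 N ×ˢ Icc 1 N)).filter
      (fun q : (ℕ×ℕ)×(ℕ×ℕ) => (q.1.1*q.1.2 = q.2.1*q.2.2) ∧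
        (q.1.1 / Nat.gcd q.1.1 q.2.1, q.2.1 / Nat.gcd q.1.1 q.2.1) = (s, t))).card)
      = (N / max s t)^2 := by
  set M := N / max s t with hM
  have hmaxpos : 0 < max s t := by omega
  rw [show (N / max s t)^2 = (Icc 1 M ×ˢ Icc 1 M).card by
    rw [Finset.card_product, Nat.card_Icc]; simp [sq, hM]]
  apply Finset.card_bij' (fun q _ => (Nat.gcd q.1.1 q.2.1, Nat.gcd q.1.2 q.2.2))
    (fun p _ => ((p.1*s, p.2*t), (p.1*t, p.2*s)))
  · rintro ⟨⟨a, b⟩, ⟨c, d⟩⟩ hq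
    simp only [Finset.mem_filter, Finset.mem_product, Finset.mem_Icc, Prod.mk.injEq] at hq ⊢
    obtain ⟨⟨⟨ha, hb⟩, hc, hd⟩, heq, hkey1, hkey2⟩ := hq
    obtain ⟨hag, hcg, hbg, hdg⟩ := core (by omega : 0 < a) (by omega : 0 < b)
      (by omega : 0 < c) heq
    set g := Nat.gcd a c
    set h := Nat.gcd b d
    rw [hkey1] at hag hdg
    rw [hkey2] at hcg hbg
    have hgpos : 0 < g := Nat.gcd_pos_of_pos_left c (by omega)
    have hhpos : 0 < h := Nat.gcd_pos_of_pos_left d (by omega)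
    constructor
    · refine ⟨hgpos, ?_⟩
      rw [hM, Nat.le_div_iff_mul_le hmaxpos]
      rcases max_cases s t with ⟨hmx, _⟩ | ⟨hmx, _⟩
      · rw [hmx]; rw [hag] at ha; omega
      · rw [hmx]; rw [hcg] at hc; omega
    · refine ⟨hhpos, ?_⟩
      rw [hM, Nat.le_div_iff_mul_le hmaxpos]
      rcases max_cases s t with ⟨hmx, _⟩ | ⟨hmx, _⟩
      · rw [hmx]; rw [hdg] at hd; omega
      · rw [hmx]; rw [hbg] at hb; omega
  · rintro ⟨g, h⟩ hp
    simp only [Finset.mem_filter, Finset.mem_product, Finset.mem_Icc, Prod.mk.injEq] at hp ⊢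
    obtain ⟨⟨hg1, hg2⟩, hh1, hh2⟩ := hp
    rw [hM, Nat.le_div_iff_mul_le hmaxpos] at hg2 hh2
    have hgs : g * s ≤ N := le_trans (Nat.mul_le_mul_left g (le_max_left s t)) hg2
    have hgt : g * t ≤ N := le_trans (Nat.mul_le_mul_left g (le_max_right s t)) hg2
    have hhs : h * s ≤ N := le_trans (Nat.mul_le_mul_left h (le_max_left s t)) hh2
    have hht : h * t ≤ N := le_trans (Nat.mul_le_mul_left h (le_max_right s t)) hh2
    have hgcd : Nat.gcd (g*s) (g*t) = g := by
      rw [Nat.gcd_mul_left, cop, mul_one]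
    refine ⟨⟨⟨⟨?_, hgs⟩, ?_, hht⟩, ⟨?_, hgt⟩, ?_, hhs⟩, by ring, ?_, ?_⟩
    · exact Nat.one_le_iff_ne_zero.2 (Nat.mul_ne_zero (by omega) (by omega))
    · exact Nat.one_le_iff_ne_zero.2 (Nat.mul_ne_zero (by omega) (by omega))
    · exact Nat.one_le_iff_ne_zero.2 (Nat.mul_ne_zero (by omega) (by omega))
    · exact Nat.one_le_iff_ne_zero.2 (Nat.mul_ne_zero (by omega) (by omega))
    · rw [hgcd, Nat.mul_div_cancel_left s (by omega : 0 < g)]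
    · rw [hgcd, Nat.mul_div_cancel_left t (by omega : 0 < g)]
  · rintro ⟨⟨a, b⟩, ⟨c, d⟩⟩ hq
    simp only [Finset.mem_filter, Finset.mem_product, Finset.mem_Icc, Prod.mk.injEq] at hq
    obtain ⟨⟨⟨ha, hb⟩, hc, hd⟩, heq, hkey1, hkey2⟩ := hq
    obtain ⟨hag, hcg, hbg, hdg⟩ := core (by omega : 0 < a) (by omega : 0 < b)
      (by omega : 0 < c) heq
    rw [hkey1] at hag hdg
    rw [hkey2] at hcg hbg
    simp only [Prod.mk.injEq]
    exact ⟨⟨hag.symm, hbg.symm⟩, hcg.symm, hdg.symm⟩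
  · rintro ⟨g, h⟩ hp
    simp only [Finset.mem_filter, Finset.mem_product, Finset.mem_Icc] at hp
    obtain ⟨⟨hg1, _⟩, hh1, _⟩ := hp
    have hgcd : Nat.gcd (g*s) (g*t) = g := by
      rw [Nat.gcd_mul_left, cop, mul_one]
    have hgcd2 : Nat.gcd (h*t) (h*s) = h := by
      rw [Nat.gcd_mul_left, Nat.Coprime.gcd_eq_one cop.symm, mul_one]
    simp only [Prod.mk.injEq]
    exact ⟨hgcd, hgcd2⟩

lemma quad_card (N : ℕ) :
    (((Icc 1 N ×ˢ Icc 1 N) ×ˢ (Icc 1 N ×ˢ Icc 1 N)).filter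
      (fun q : (ℕ×ℕ)×(ℕ×ℕ) => q.1.1*q.1.2 = q.2.1*q.2.2)).card
    = ∑ st ∈ (Icc 1 N ×ˢ Icc 1 N).filter (fun st : ℕ×ℕ => Nat.Coprime st.1 st.2),
        (N / max st.1 st.2)^2 := by
  rw [Finset.card_eq_sum_card_fiberwise
    (f := fun q : (ℕ×ℕ)×(ℕ×ℕ) =>
      (q.1.1 / Nat.gcd q.1.1 q.2.1, q.2.1 / Nat.gcd q.1.1 q.2.1))
    (t := (Icc 1 N ×ˢ Icc 1 N).filter (fun st : ℕ×ℕ => Nat.Coprime st.1 st.2)) ?_]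
  · apply Finset.sum_congr rfl
    rintro ⟨s, t⟩ hst
    simp only [Finset.mem_filter, Finset.mem_product, Finset.mem_Icc] at hst
    obtain ⟨⟨⟨hs1, hsN⟩, ht1, htN⟩, cop⟩ := hst
    rw [Finset.filter_filter]
    exact fiber_card N s t hs1 hsN ht1 htN cop
  · rintro ⟨⟨a, b⟩, ⟨c, d⟩⟩ hq
    change ((a, b), c, d) ∈ ((Icc 1 N ×ˢ Icc 1 N) ×ˢ (Icc 1 N ×ˢ Icc 1 N)).filter
      (fun q : (ℕ×ℕ)×(ℕ×ℕ) => q.1.1*q.1.2 = q.2.1*q.2.2) at hq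
    simp only [Finset.mem_coe, Finset.mem_filter, Finset.mem_product, Finset.mem_Icc] at hq ⊢
    obtain ⟨⟨⟨ha, hb⟩, hc, hd⟩, heq⟩ := hq
    have hgpos : 0 < Nat.gcd a c := Nat.gcd_pos_of_pos_left c (by omega)
    refine ⟨⟨⟨?_, ?_⟩, ?_, ?_⟩, ?_⟩
    · exact Nat.div_pos (Nat.le_of_dvd (by omega) (Nat.gcd_dvd_left a c)) hgpos
    · exact le_trans (Nat.div_le_self a _) ha.2
    · exact Nat.div_pos (Nat.le_of_dvd (by omega) (Nat.gcd_dvd_right a c)) hgpos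
    · exact le_trans (Nat.div_le_self c _) hc.2
    · exact Nat.coprime_div_gcd_div_gcd hgpos

lemma totient_coprime_card (m : ℕ) (hm : 1 ≤ m) :
    ((Icc 1 m).filter (fun s => Nat.Coprime s m)).card = Nat.totient m := by
  rcases eq_or_lt_of_le hm with h1 | h2
  · rw [← h1]
    decide
  · rw [Nat.totient_eq_card_coprime]
    congr 1
    ext x
    simp only [Finset.mem_filter, Finset.mem_Icc, Finset.mem_range]
    constructor
    · rintro ⟨⟨hx1, hx2⟩, hc⟩
      refine ⟨?_, hc.symm⟩
      rcases eq_or_lt_of_le hx2 with h | h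
      · exfalso
        subst h
        have hgs : Nat.gcd x x = x := Nat.gcd_self x
        rw [Nat.Coprime] at hc
        omega
      · exact h
    · rintro ⟨hlt, hc⟩
      refine ⟨⟨?_, hlt.le⟩, hc.symm⟩
      rcases Nat.eq_zero_or_pos x with rfl | h
      · exfalso
        rw [Nat.coprime_zero_right] at hc
        omega
      · exact h

lemma sum_P1 (N : ℕ) (f : ℕ → ℕ) :
    ∑ st ∈ ((Icc 1 N ×ˢ Icc 1 N).filter
        (fun st : ℕ×ℕ => Nat.Coprime st.1 st.2)).filter (fun st => st.1 ≤ st.2),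
      f (max st.1 st.2)
    = ∑ m ∈ Icc 1 N, Nat.totient m * f m := by
  rw [← Finset.sum_fiberwise_of_maps_to (g := fun st : ℕ×ℕ => st.2) (t := Icc 1 N) ?_]
  · apply Finset.sum_congr rfl
    intro m hm
    rw [Finset.mem_Icc] at hm
    have : ∀ st ∈ (((Icc 1 N ×ˢ Icc 1 N).filter
        (fun st : ℕ×ℕ => Nat.Coprime st.1 st.2)).filter
          (fun st => st.1 ≤ st.2)).filter (fun st => st.2 = m),
        f (max st.1 st.2) = f m := by
      rintro ⟨s, t⟩ hst
      simp only [Finset.mem_filter] at hst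
      obtain ⟨⟨_, hle⟩, ht⟩ := hst
      simp only at hle ht ⊢
      rw [ht] at hle ⊢
      rw [max_eq_right hle]
    rw [Finset.sum_congr rfl this, Finset.sum_const, smul_eq_mul]
    congr 1
    rw [← totient_coprime_card m hm.1]
    refine Finset.card_bij' (fun st _ => st.1) (fun s _ => (s, m)) ?_ ?_ ?_ ?_
    · rintro ⟨s, t⟩ hst
      simp only [Finset.mem_filter, Finset.mem_product, Finset.mem_Icc] at hst ⊢
      obtain ⟨⟨⟨⟨⟨hs1, _⟩, _⟩, cop⟩, hle⟩, ht⟩ := hst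
      subst ht
      exact ⟨⟨hs1, hle⟩, cop⟩
    · rintro s hs
      simp only [Finset.mem_filter, Finset.mem_Icc, Finset.mem_product] at hs ⊢
      obtain ⟨⟨hs1, hsm⟩, cop⟩ := hs
      exact ⟨⟨⟨⟨⟨hs1, le_trans hsm hm.2⟩, hm.1, hm.2⟩, cop⟩, hsm⟩, trivial⟩
    · rintro ⟨s, t⟩ hst
      simp only [Finset.mem_filter] at hst
      obtain ⟨⟨_, _⟩, ht⟩ := hst
      subst ht
      rfl
    · rintro s _
      rfl
  · rintro ⟨s, t⟩ hst
    simp only [Finset.mem_filter, Finset.mem_product] at hst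
    exact hst.1.1.2

lemma sum_P2 (N : ℕ) (f : ℕ → ℕ) :
    ∑ st ∈ ((Icc 1 N ×ˢ Icc 1 N).filter
        (fun st : ℕ×ℕ => Nat.Coprime st.1 st.2)).filter (fun st => st.2 ≤ st.1),
      f (max st.1 st.2)
    = ∑ m ∈ Icc 1 N, Nat.totient m * f m := by
  rw [← sum_P1 N f]
  apply Finset.sum_nbij' (fun st => (st.2, st.1)) (fun st => (st.2, st.1))
  · rintro ⟨s, t⟩ hst
    simp only [Finset.mem_filter, Finset.mem_product, Finset.mem_Icc] at hst ⊢
    exact ⟨⟨⟨hst.1.1.2, hst.1.1.1⟩, hst.1.2.symm⟩, hst.2⟩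
  · rintro ⟨s, t⟩ hst
    simp only [Finset.mem_filter, Finset.mem_product, Finset.mem_Icc] at hst ⊢
    exact ⟨⟨⟨hst.1.1.2, hst.1.1.1⟩, hst.1.2.symm⟩, hst.2⟩
  · rintro ⟨s, t⟩ _; rfl
  · rintro ⟨s, t⟩ _; rfl
  · rintro ⟨s, t⟩ _
    simp [max_comm]

lemma sum_coprime_max (N : ℕ) (hN : 1 ≤ N) (f : ℕ → ℕ) :
    ∑ st ∈ (Icc 1 N ×ˢ Icc 1 N).filter (fun st : ℕ×ℕ => Nat.Coprime st.1 st.2),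
      f (max st.1 st.2) + f 1
    = 2 * ∑ m ∈ Icc 1 N, Nat.totient m * f m := by
  set P := (Icc 1 N ×ˢ Icc 1 N).filter (fun st : ℕ×ℕ => Nat.Coprime st.1 st.2) with hP
  set P1 := P.filter (fun st => st.1 ≤ st.2) with hP1
  set P2 := P.filter (fun st => st.2 ≤ st.1) with hP2
  have hunion : P1 ∪ P2 = P := by
    ext st
    simp only [hP1, hP2, Finset.mem_union, Finset.mem_filter]
    rcases le_total st.1 st.2 with h | h
    · tauto
    · tauto
  have hinter : P1 ∩ P2 = {(1, 1)} := by
    ext st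
    simp only [hP1, hP2, hP, Finset.mem_inter, Finset.mem_filter, Finset.mem_product,
      Finset.mem_Icc, Finset.mem_singleton]
    constructor
    · rintro ⟨⟨⟨_, cop⟩, h12⟩, _, h21⟩
      have heq : st.1 = st.2 := le_antisymm h12 h21
      have hgs : Nat.gcd st.2 st.2 = st.2 := Nat.gcd_self st.2
      rw [Nat.Coprime, heq] at cop
      have h1 : st.2 = 1 := by omega
      have : st = (st.1, st.2) := rfl
      rw [this, heq, h1]
    · rintro rfl
      refine ⟨⟨⟨⟨⟨le_refl 1, hN⟩, le_refl 1, hN⟩, Nat.coprime_one_left 1⟩, le_refl 1⟩,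
        ⟨⟨⟨⟨le_refl 1, hN⟩, le_refl 1, hN⟩, Nat.coprime_one_left 1⟩, le_refl 1⟩⟩
  have := Finset.sum_union_inter (s₁ := P1) (s₂ := P2)
    (f := fun st : ℕ×ℕ => f (max st.1 st.2))
  rw [hunion, hinter] at this
  rw [Finset.sum_singleton] at this
  simp only [max_self] at this
  rw [this, hP1, hP2, hP, sum_P1 N f, sum_P2 N f, two_mul]

lemma nat_identity (N : ℕ) (hN : 1 ≤ N) :
    ∑ n ∈ Icc 1 (N^2), tauN N n ^ 2 + N^2
      = 2 * ∑ m ∈ Icc 1 N, Nat.totient m * (N/m)^2 := by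
  rw [sum_sq_eq_quad, quad_card]
  have h := sum_coprime_max N hN (fun m => (N/m)^2)
  simpa using h

lemma mu_abs_le (d : ℕ) : ‖(μ d : ℝ)‖ ≤ 1 := by
  rw [Real.norm_eq_abs, ← Int.cast_abs]
  exact_mod_cast ArithmeticFunction.abs_moebius_le_one

lemma summable_one_div_sq : Summable (fun d : ℕ => 1 / (d:ℝ)^2) :=
  (Real.summable_one_div_nat_pow (p := 2)).2 one_lt_two

lemma summable_mu_norm : Summable (fun d : ℕ => ‖(μ d : ℝ) / (d:ℝ)^2‖) := by
  apply Summable.of_nonneg_of_le (fun d => norm_nonneg _) (fun d => ?_) summable_one_div_sq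
  rw [norm_div, norm_pow, Real.norm_natCast]
  rcases eq_or_ne d 0 with rfl | hd
  · simp
  · exact div_le_div_of_nonneg_right (mu_abs_le d) (by positivity)

lemma summable_mu : Summable (fun d : ℕ => (μ d : ℝ) / (d:ℝ)^2) :=
  summable_mu_norm.of_norm

lemma mu_tsum : ∑' d : ℕ, (μ d : ℝ) / (d:ℝ)^2 = 6 / π^2 := by
  have h2 : (1:ℝ) < (2:ℂ).re := by norm_num
  have hmul := LSeries_one_mul_Lseries_moebius (s := 2) h2
  have hz : LSeries 1 2 = riemannZeta 2 := LSeries_one_eq_riemannZeta h2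
  have hπ : ((π:ℂ))^2 ≠ 0 := by
    simp [Real.pi_ne_zero]
  have hLmu : LSeries (fun n => (μ n : ℂ)) 2 = 6 / (π:ℂ)^2 := by
    rw [hz, riemannZeta_two] at hmul
    field_simp at hmul ⊢
    linear_combination hmul
  have key : ((∑' d : ℕ, (μ d : ℝ) / (d:ℝ)^2 : ℝ) : ℂ) = LSeries (fun n => (μ n : ℂ)) 2 := by
    rw [Complex.ofReal_tsum]
    unfold LSeries
    congr 1
    ext n
    rcases eq_or_ne n 0 with rfl | hn
    · simp [LSeries.term]
    · rw [LSeries.term_of_ne_zero hn]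
      push_cast
      norm_num
  rw [hLmu, show (6 / (π:ℂ)^2) = ((6 / π^2 : ℝ) : ℂ) by push_cast; ring] at key
  exact_mod_cast key

lemma mu_partial_close (N : ℕ) (hN : 1 ≤ N) :
    |(∑ d ∈ Icc 1 N, (μ d:ℝ)/(d:ℝ)^2) - 6/π^2| ≤ (1:ℝ)/N := by
  rw [← mu_tsum]
  have hins : (range (N+1)) = insert 0 (Icc 1 N) := by ext x; simp; omega
  have hpart : ∑ d ∈ Icc 1 N, (μ d:ℝ)/(d:ℝ)^2 = ∑ d ∈ range (N+1), (μ d:ℝ)/(d:ℝ)^2 := by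
    rw [hins, Finset.sum_insert (by simp)]
    simp
  rw [hpart, abs_sub_comm, ← summable_mu.sum_add_tsum_nat_add (N+1), add_sub_cancel_left]
  have hshift : Summable (fun i : ℕ => ‖(μ (i+(N+1)) : ℝ) / ((i+(N+1):ℕ):ℝ)^2‖) :=
    (summable_nat_add_iff (f := fun d : ℕ => ‖(μ d:ℝ)/(d:ℝ)^2‖) (N+1)).2 summable_mu_norm
  calc |∑' i : ℕ, (μ (i+(N+1)) : ℝ) / ((i+(N+1):ℕ):ℝ)^2|
      ≤ ∑' i : ℕ, ‖(μ (i+(N+1)) : ℝ) / ((i+(N+1):ℕ):ℝ)^2‖ := by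
        rw [← Real.norm_eq_abs]; exact norm_tsum_le_tsum_norm hshift
    _ ≤ 1/N := by
        apply hshift.tsum_le_of_sum_range_le
        intro n
        set F : ℕ → ℝ := fun i => 1/((i:ℝ)+N) with hF
        have hN' : (1:ℝ) ≤ N := by exact_mod_cast hN
        calc ∑ i ∈ range n, ‖(μ (i+(N+1)) : ℝ) / ((i+(N+1):ℕ):ℝ)^2‖
            ≤ ∑ i ∈ range n, (F i - F (i+1)) := by
              apply Finset.sum_le_sum
              intro i _
              have hx : (0:ℝ) < (i:ℝ) + N := by positivity
              have hx1 : (0:ℝ) < (i:ℝ) + N + 1 := by positivity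
              have hcast : (((i+(N+1)):ℕ):ℝ) = (i:ℝ) + N + 1 := by push_cast; ring
              rw [norm_div, norm_pow, Real.norm_natCast, hcast, hF]
              have h1 : ‖(μ (i+(N+1)) : ℝ)‖ / ((i:ℝ)+N+1)^2 ≤ 1 / ((i:ℝ)+N+1)^2 :=
                div_le_div_of_nonneg_right (mu_abs_le _) (by positivity)
              refine h1.trans ?_
              push_cast
              have heq : 1/((i:ℝ)+N) - 1/((i:ℝ)+1+N) = 1/(((i:ℝ)+N)*((i:ℝ)+N+1)) := by
                rw [div_sub_div _ _ hx.ne' (by positivity : ((i:ℝ)+1+(N:ℝ)) ≠ 0)]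
                congr 1
                · ring
                · ring
              rw [heq]
              apply one_div_le_one_div_of_le (by positivity)
              nlinarith
          _ = F 0 - F n := Finset.sum_range_sub' F n
          _ ≤ 1/N := by
              have hn : (0:ℝ) ≤ 1/((n:ℝ)+N) := by positivity
              simp only [hF, Nat.cast_zero, zero_add]
              linarith

lemma log_div_sq_nonneg (d : ℕ) : 0 ≤ Real.log d / (d:ℝ)^2 := by
  rcases Nat.eq_zero_or_pos d with rfl | hd
  · simp
  · apply div_nonneg _ (by positivity)
    apply Real.log_nonneg
    exact_mod_cast hd

lemma summable_log_div_sq : Summable (fun d : ℕ => Real.log d / (d:ℝ)^2) := by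
  apply Summable.of_nonneg_of_le log_div_sq_nonneg (fun d => ?_)
    (((Real.summable_one_div_nat_rpow (p := 3/2)).2 (by norm_num)).mul_left 2)
  rcases Nat.eq_zero_or_pos d with rfl | hd
  · norm_num
  · have hd0 : (0:ℝ) < d := by exact_mod_cast hd
    have h1 : Real.log d ≤ 2 * Real.sqrt d := by
      have hs : (0:ℝ) < Real.sqrt d := Real.sqrt_pos.2 hd0
      have := Real.log_le_sub_one_of_pos hs
      have hlog : Real.log d = 2 * Real.log (Real.sqrt d) := by
        rw [Real.log_sqrt hd0.le]; ring
      nlinarith [Real.sqrt_nonneg (d:ℝ)]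
    calc Real.log d / (d:ℝ)^2 ≤ 2 * Real.sqrt d / (d:ℝ)^2 :=
          div_le_div_of_nonneg_right h1 (by positivity)
      _ = 2 * (1 / (d:ℝ)^((3:ℝ)/2)) := by
          rw [Real.sqrt_eq_rpow]
          rw [show ((d:ℝ)^2 : ℝ) = (d:ℝ)^(2:ℝ) by rw [Real.rpow_two]]
          rw [mul_div_assoc, ← Real.rpow_sub hd0]
          rw [show (1:ℝ)/2 - 2 = -(3/2) by norm_num, Real.rpow_neg hd0.le]
          rw [one_div]

lemma sum_Icc_inv_eq (k : ℕ) : ∑ e ∈ Icc 1 k, (1:ℝ)/e = ((harmonic k : ℚ) : ℝ) := by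
  rw [← Finset.Ico_add_one_right_eq_Icc, Finset.sum_Ico_eq_sum_range]
  push_cast [harmonic]
  apply Finset.sum_congr (by norm_num)
  intro i _
  rw [one_div, add_comm]

-- bounds on the harmonic-like sum
lemma Hsum_bounds (N d : ℕ) (h1 : 1 ≤ d) (h2 : d ≤ N) :
    |(∑ e ∈ Icc 1 (N/d), (1:ℝ)/e) - (Real.log N - Real.log d)| ≤ 1 := by
  set k := N / d with hk
  have hk1 : 1 ≤ k := (Nat.one_le_div_iff h1).2 h2
  have hdpos : (0:ℝ) < d := by exact_mod_cast h1
  have hNpos : (0:ℝ) < N := by exact_mod_cast lt_of_lt_of_le h1 h2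
  have hlogdiv : Real.log N - Real.log d = Real.log ((N:ℝ)/d) :=
    (Real.log_div hNpos.ne' hdpos.ne').symm
  have hup : ((k:ℝ)) ≤ (N:ℝ)/d := by
    rw [le_div_iff₀ hdpos]
    exact_mod_cast Nat.div_mul_le_self N d
  have hlow : (N:ℝ)/d ≤ (k:ℝ) + 1 := by
    rw [div_le_iff₀ hdpos]
    have : N < (k+1) * d := by
      have hm := Nat.div_add_mod N d
      have hlt : N % d < d := Nat.mod_lt N h1
      have h2 : (k+1)*d = d*(N/d) + d := by rw [hk]; ring
      omega
    calc (N:ℝ) ≤ ((k+1)*d : ℕ) := by exact_mod_cast this.le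
      _ = ((k:ℝ)+1) * d := by push_cast; ring
  rw [sum_Icc_inv_eq, hlogdiv]
  have hub := harmonic_le_one_add_log k
  have hlb := log_add_one_le_harmonic k
  have l1 : Real.log ((N:ℝ)/d) ≤ Real.log ((k:ℝ)+1) := by
    apply Real.log_le_log (by positivity) hlow
  have l2 : Real.log (k:ℝ) ≤ Real.log ((N:ℝ)/d) := by
    apply Real.log_le_log (by exact_mod_cast hk1) hup
  rw [abs_le]
  constructor
  · push_cast at hlb ⊢
    linarith
  · linarith

lemma phi_eq (m : ℕ) (hm : 0 < m) :
    (Nat.totient m : ℝ) = ∑ p ∈ m.divisorsAntidiagonal, (μ p.1 : ℝ) * p.2 := by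
  refine ((ArithmeticFunction.sum_eq_iff_sum_mul_moebius_eq
    (f := fun n => (Nat.totient n : ℝ)) (g := fun n => (n:ℝ))).1 ?_ m hm).symm
  intro n _
  exact_mod_cast congrArg (Nat.cast : ℕ → ℝ) (Nat.sum_totient n)

lemma hyperbola (N : ℕ) (F : ℕ → ℕ → ℝ) :
    ∑ m ∈ Icc 1 N, ∑ p ∈ m.divisorsAntidiagonal, F p.1 p.2
      = ∑ d ∈ Icc 1 N, ∑ e ∈ Icc 1 (N/d), F d e := by
  rw [Finset.sum_sigma', Finset.sum_sigma']
  refine Finset.sum_nbij' (fun x => ⟨x.2.1, x.2.2⟩) (fun x => ⟨x.1*x.2, (x.1, x.2)⟩)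
    ?_ ?_ ?_ ?_ ?_
  · rintro ⟨m, p⟩ hx
    simp only [Finset.mem_sigma, Finset.mem_Icc, Nat.mem_divisorsAntidiagonal] at hx ⊢
    obtain ⟨⟨hm1, hm2⟩, hpm, hm0⟩ := hx
    have hp1 : 0 < p.1 := by
      rcases Nat.eq_zero_or_pos p.1 with h | h
      · exfalso; rw [h, zero_mul] at hpm; omega
      · exact h
    have hp2 : 0 < p.2 := by
      rcases Nat.eq_zero_or_pos p.2 with h | h
      · exfalso; rw [h, mul_zero] at hpm; omega
      · exact h
    refine ⟨⟨hp1, ?_⟩, hp2, ?_⟩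
    · calc p.1 ≤ p.1 * p.2 := Nat.le_mul_of_pos_right _ hp2
        _ = m := hpm
        _ ≤ N := hm2
    · rw [Nat.le_div_iff_mul_le hp1]
      rw [mul_comm]
      omega
  · rintro ⟨d, e⟩ hx
    simp only [Finset.mem_sigma, Finset.mem_Icc, Nat.mem_divisorsAntidiagonal] at hx ⊢
    obtain ⟨⟨hd1, hd2⟩, he1, he2⟩ := hx
    rw [Nat.le_div_iff_mul_le (by omega : 0 < d)] at he2
    have hde : d * e ≤ N := by rw [mul_comm]; exact he2
    exact ⟨⟨Nat.one_le_iff_ne_zero.2 (Nat.mul_ne_zero (by omega) (by omega)), hde⟩,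
      trivial, Nat.mul_ne_zero (by omega) (by omega)⟩
  · rintro ⟨m, p⟩ hx
    simp only [Finset.mem_sigma, Finset.mem_Icc, Nat.mem_divisorsAntidiagonal] at hx
    obtain ⟨_, hpm, _⟩ := hx
    simp [hpm]
  · rintro ⟨d, e⟩ _
    rfl
  · rintro ⟨m, p⟩ _
    rfl

lemma mu_div_abs_le (d : ℕ) : |(μ d : ℝ)/(d:ℝ)^2| ≤ 1/(d:ℝ)^2 := by
  rw [abs_div, abs_of_nonneg (by positivity : (0:ℝ) ≤ (d:ℝ)^2)]
  exact div_le_div_of_nonneg_right (by rw [← Real.norm_eq_abs]; exact mu_abs_le d) (by positivity)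

noncomputable def C1 : ℝ := ∑' d : ℕ, Real.log d / (d:ℝ)^2
noncomputable def C2 : ℝ := ∑' d : ℕ, 1 / (d:ℝ)^2

lemma phi_sum_asymp (N : ℕ) (hN : 1 ≤ N) :
    |(∑ m ∈ Icc 1 N, (Nat.totient m : ℝ)/(m:ℝ)^2) - 6/π^2 * Real.log N| ≤ C2 + 1 + C1 := by
  have hstep : ∑ m ∈ Icc 1 N, (Nat.totient m : ℝ)/(m:ℝ)^2
      = ∑ d ∈ Icc 1 N, (μ d : ℝ)/(d:ℝ)^2 * (∑ e ∈ Icc 1 (N/d), (1:ℝ)/e) := by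
    have h1 : ∀ m ∈ Icc 1 N, (Nat.totient m : ℝ)/(m:ℝ)^2
        = ∑ p ∈ m.divisorsAntidiagonal, (μ p.1 : ℝ)/((p.1:ℝ)^2 * p.2) := by
      intro m hm
      rw [Finset.mem_Icc] at hm
      rw [phi_eq m (by omega), Finset.sum_div]
      apply Finset.sum_congr rfl
      intro p hp
      obtain ⟨hpm, hm0⟩ := Nat.mem_divisorsAntidiagonal.1 hp
      have hp1 : p.1 ≠ 0 := by rintro h; rw [h, zero_mul] at hpm; omega
      have hp2 : p.2 ≠ 0 := by rintro h; rw [h, mul_zero] at hpm; omega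
      have hp1' : ((p.1:ℝ)) ≠ 0 := Nat.cast_ne_zero.2 hp1
      have hp2' : ((p.2:ℝ)) ≠ 0 := Nat.cast_ne_zero.2 hp2
      have hmcast : (m:ℝ) = (p.1:ℝ) * p.2 := by exact_mod_cast hpm.symm
      field_simp [hmcast]
      rw [hmcast]; ring
    rw [Finset.sum_congr rfl h1, hyperbola N (fun d e => (μ d : ℝ)/((d:ℝ)^2 * e))]
    apply Finset.sum_congr rfl
    intro d _
    rw [Finset.mul_sum]
    apply Finset.sum_congr rfl
    intro e _
    rw [div_mul_div_comm, mul_one]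
  set S := ∑ d ∈ Icc 1 N, (μ d : ℝ)/(d:ℝ)^2 with hS
  set R := ∑ d ∈ Icc 1 N, (μ d : ℝ)/(d:ℝ)^2 *
      ((∑ e ∈ Icc 1 (N/d), (1:ℝ)/e) - (Real.log N - Real.log d)) with hR
  set L := ∑ d ∈ Icc 1 N, (μ d : ℝ)/(d:ℝ)^2 * Real.log d with hL
  have hkey : (∑ m ∈ Icc 1 N, (Nat.totient m : ℝ)/(m:ℝ)^2) - 6/π^2 * Real.log N
      = R + Real.log N * (S - 6/π^2) - L := by
    rw [hstep]
    have hRexp : R = (∑ d ∈ Icc 1 N, (μ d : ℝ)/(d:ℝ)^2 * (∑ e ∈ Icc 1 (N/d), (1:ℝ)/e))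
        - S * Real.log N + L := by
      rw [hR, hS, hL, Finset.sum_mul, ← Finset.sum_sub_distrib, ← Finset.sum_add_distrib]
      apply Finset.sum_congr rfl
      intro d _
      ring
    rw [hRexp]
    ring
  rw [hkey]
  have hRb : |R| ≤ C2 := by
    calc |R| ≤ ∑ d ∈ Icc 1 N, |(μ d : ℝ)/(d:ℝ)^2 *
        ((∑ e ∈ Icc 1 (N/d), (1:ℝ)/e) - (Real.log N - Real.log d))| :=
          Finset.abs_sum_le_sum_abs _ _
      _ ≤ ∑ d ∈ Icc 1 N, 1/(d:ℝ)^2 := by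
          apply Finset.sum_le_sum
          intro d hd
          rw [Finset.mem_Icc] at hd
          rw [abs_mul]
          have h1 := mu_div_abs_le d
          have h2 := Hsum_bounds N d hd.1 hd.2
          calc |(μ d : ℝ)/(d:ℝ)^2| * _ ≤ (1/(d:ℝ)^2) * 1 :=
                mul_le_mul h1 h2 (abs_nonneg _) (by positivity)
            _ = 1/(d:ℝ)^2 := mul_one _
      _ ≤ C2 := Summable.sum_le_tsum _ (fun i _ => by positivity) summable_one_div_sq
  have hTb : |Real.log N * (S - 6/π^2)| ≤ 1 := by
    rw [abs_mul]
    have hN1 : (1:ℝ) ≤ N := by exact_mod_cast hN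
    have hlogpos : 0 ≤ Real.log N := Real.log_nonneg hN1
    have hlogN : Real.log N ≤ N := by
      have := Real.log_le_sub_one_of_pos (by linarith : (0:ℝ) < N)
      linarith
    calc |Real.log N| * |S - 6/π^2| ≤ (N:ℝ) * ((1:ℝ)/N) := by
          apply mul_le_mul _ (mu_partial_close N hN) (abs_nonneg _) (by positivity)
          rw [abs_of_nonneg hlogpos]; exact hlogN
      _ = 1 := by field_simp
  have hLb : |L| ≤ C1 := by
    calc |L| ≤ ∑ d ∈ Icc 1 N, |(μ d : ℝ)/(d:ℝ)^2 * Real.log d| :=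
          Finset.abs_sum_le_sum_abs _ _
      _ ≤ ∑ d ∈ Icc 1 N, Real.log d/(d:ℝ)^2 := by
          apply Finset.sum_le_sum
          intro d hd
          rw [Finset.mem_Icc] at hd
          have hld : 0 ≤ Real.log d := Real.log_nonneg (by exact_mod_cast hd.1)
          rw [abs_mul, abs_of_nonneg hld]
          calc |(μ d : ℝ)/(d:ℝ)^2| * Real.log d ≤ (1/(d:ℝ)^2) * Real.log d :=
                mul_le_mul_of_nonneg_right (mu_div_abs_le d) hld
            _ = Real.log d/(d:ℝ)^2 := by ring
      _ ≤ C1 := Summable.sum_le_tsum _ (fun i _ => log_div_sq_nonneg i) summable_log_div_sq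
  calc |R + Real.log N * (S - 6/π^2) - L| ≤ |R| + |Real.log N * (S - 6/π^2)| + |L| := by
        have := abs_add_le (R + Real.log N * (S - 6/π^2)) (-L)
        have h2 := abs_add_le R (Real.log N * (S - 6/π^2))
        rw [abs_neg] at this
        calc |R + Real.log N * (S - 6/π^2) - L|
            = |R + Real.log N * (S - 6/π^2) + -L| := by ring_nf
          _ ≤ _ := by linarith
    _ ≤ C2 + 1 + C1 := by linarith

end Aux

section Final
open ArithmeticFunction ArithmeticFunction.Moebius Real

lemma abs_add3 (a b c : ℝ) : |a + b - c| ≤ |a| + |b| + |c| := by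
  have h1 := abs_add_le (a+b) (-c)
  rw [abs_neg] at h1
  have h2 := abs_add_le a b
  calc |a + b - c| = |a + b + -c| := by rw [sub_eq_add_neg]
    _ ≤ |a+b| + |c| := h1
    _ ≤ |a| + |b| + |c| := by linarith

/-- `∑_{n=1}^{N²} τ_N(n)² = (12/π²) N² log N + O(N²)` as `N → ∞`. -/
theorem sum_tauN_sq :
    (fun N : ℕ =>
        (∑ n ∈ Finset.Icc 1 (N ^ 2), (tauN N n : ℝ) ^ 2) -
          12 / Real.pi ^ 2 * (N : ℝ) ^ 2 * Real.log N)
      =O[atTop] fun N : ℕ => (N : ℝ) ^ 2 := by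
  rw [Asymptotics.isBigO_iff]
  refine ⟨5 + 2*(C2 + 1 + C1), ?_⟩
  filter_upwards [Filter.eventually_ge_atTop 1] with N hN
  have hid := nat_identity N hN
  have hidR : (∑ n ∈ Icc 1 (N^2), (tauN N n : ℝ)^2) + (N:ℝ)^2
      = 2 * ∑ m ∈ Icc 1 N, (Nat.totient m : ℝ) * ((N/m : ℕ):ℝ)^2 := by
    exact_mod_cast congrArg (Nat.cast : ℕ → ℝ) hid
  set A := ∑ m ∈ Icc 1 N, (Nat.totient m : ℝ) * ((N/m : ℕ):ℝ)^2 with hA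
  set B := ∑ m ∈ Icc 1 N, (Nat.totient m : ℝ) * ((N:ℝ)/m)^2 with hBdef
  have hAB : |A - B| ≤ 2*(N:ℝ)^2 := by
    rw [hA, hBdef, ← Finset.sum_sub_distrib]
    calc |∑ m ∈ Icc 1 N, ((Nat.totient m : ℝ) * ((N/m : ℕ):ℝ)^2
            - (Nat.totient m : ℝ) * ((N:ℝ)/m)^2)|
        ≤ ∑ m ∈ Icc 1 N, |(Nat.totient m : ℝ) * ((N/m : ℕ):ℝ)^2
            - (Nat.totient m : ℝ) * ((N:ℝ)/m)^2| := Finset.abs_sum_le_sum_abs _ _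
      _ ≤ ∑ _m ∈ Icc 1 N, 2*(N:ℝ) := by
          apply Finset.sum_le_sum
          intro m hm
          rw [Finset.mem_Icc] at hm
          have hmpos : (0:ℝ) < m := by exact_mod_cast hm.1
          set x := ((N/m : ℕ):ℝ) with hx
          set y := ((N:ℝ)/m) with hy
          have hx0 : 0 ≤ x := by positivity
          have hxy : x ≤ y := by
            rw [hy, le_div_iff₀ hmpos, hx]
            exact_mod_cast Nat.div_mul_le_self N m
          have hyx : y ≤ x + 1 := by
            rw [hy, div_le_iff₀ hmpos]
            have hmlt : N % m < m := Nat.mod_lt N hm.1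
            have hdm := Nat.div_add_mod N m
            have : N ≤ (N/m + 1) * m := by
              have h2 : (N/m+1)*m = m*(N/m) + m := by ring
              omega
            calc (N:ℝ) ≤ ((N/m + 1) * m : ℕ) := by exact_mod_cast this
              _ = (x + 1) * m := by push_cast; ring
          have habs : |(Nat.totient m : ℝ) * x^2 - (Nat.totient m : ℝ) * y^2|
              = (Nat.totient m : ℝ) * (y^2 - x^2) := by
            rw [show (Nat.totient m : ℝ) * x^2 - (Nat.totient m : ℝ) * y^2
              = -((Nat.totient m : ℝ) * (y^2 - x^2)) by ring, abs_neg]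
            apply abs_of_nonneg
            apply mul_nonneg (by positivity)
            nlinarith
          rw [habs]
          have hphi : (Nat.totient m : ℝ) ≤ m := by exact_mod_cast Nat.totient_le m
          have hsq : y^2 - x^2 ≤ 2*y := by nlinarith
          calc (Nat.totient m : ℝ) * (y^2 - x^2) ≤ (m:ℝ) * (2*y) := by
                apply mul_le_mul hphi hsq (by nlinarith) hmpos.le
            _ = 2*(N:ℝ) := by rw [hy]; field_simp
      _ = 2*(N:ℝ)^2 := by
          rw [Finset.sum_const, Nat.card_Icc, nsmul_eq_mul]
          push_cast
          ring
  have hB : B = (N:ℝ)^2 * ∑ m ∈ Icc 1 N, (Nat.totient m:ℝ)/(m:ℝ)^2 := by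
    rw [hBdef, Finset.mul_sum]
    apply Finset.sum_congr rfl
    intro m _
    rw [div_pow]
    ring
  have hmain := phi_sum_asymp N hN
  have hNR : (1:ℝ) ≤ (N:ℝ) := by exact_mod_cast hN
  have hkey : (∑ n ∈ Icc 1 (N^2), (tauN N n : ℝ)^2) - 12/π^2 * (N:ℝ)^2 * Real.log N
      = 2*(A - B) + 2*(N:ℝ)^2 * ((∑ m ∈ Icc 1 N, (Nat.totient m:ℝ)/(m:ℝ)^2)
        - 6/π^2 * Real.log N) - (N:ℝ)^2 := by
    have hT : (∑ n ∈ Icc 1 (N^2), (tauN N n : ℝ)^2) = 2*A - (N:ℝ)^2 := by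
      linarith [hidR]
    rw [hT, hB]
    ring
  rw [Real.norm_eq_abs, hkey]
  have h1 : |2*(A-B)| ≤ 4*(N:ℝ)^2 := by
    rw [abs_mul, abs_two]
    linarith
  have h2 : |2*(N:ℝ)^2 * ((∑ m ∈ Icc 1 N, (Nat.totient m:ℝ)/(m:ℝ)^2)
      - 6/π^2 * Real.log N)| ≤ 2*(N:ℝ)^2 * (C2 + 1 + C1) := by
    rw [abs_mul]
    apply mul_le_mul _ hmain (abs_nonneg _) (by positivity)
    rw [abs_of_nonneg (by positivity)]
  have hnorm : ‖(N:ℝ)^2‖ = (N:ℝ)^2 := by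
    rw [Real.norm_eq_abs, abs_of_nonneg (by positivity)]
  rw [hnorm]
  have habs3 : |(N:ℝ)^2| = (N:ℝ)^2 := abs_of_nonneg (by positivity)
  calc |2*(A-B) + 2*(N:ℝ)^2 * ((∑ m ∈ Icc 1 N, (Nat.totient m:ℝ)/(m:ℝ)^2)
        - 6/π^2 * Real.log N) - (N:ℝ)^2|
      ≤ |2*(A-B)| + |2*(N:ℝ)^2 * ((∑ m ∈ Icc 1 N, (Nat.totient m:ℝ)/(m:ℝ)^2)
        - 6/π^2 * Real.log N)| + |(N:ℝ)^2| := abs_add3 _ _ _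
    _ ≤ 4*(N:ℝ)^2 + 2*(N:ℝ)^2 * (C2 + 1 + C1) + (N:ℝ)^2 := by
        rw [habs3]; linarith
    _ ≤ (5 + 2*(C2 + 1 + C1)) * (N:ℝ)^2 := by nlinarith [sq_nonneg (N:ℝ)]

end Final
end

section
/- The number of quadruples (a,b,c,d) of positive integers with 1 ≤ a,b,c,d ≤ H satisfying ad = bc equals (12/π²)·H²·log H + O(H²) as H → ∞. -/
open Finset Filter

/-- The number of quadruples `(a,b,c,d) ∈ [1,H]⁴` with `ad = bc`. -/
def singCount (H : ℕ) : ℕ :=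
  ((Finset.Icc 1 H ×ˢ Finset.Icc 1 H ×ˢ Finset.Icc 1 H ×ˢ Finset.Icc 1 H).filter
    fun x => x.1 * x.2.2.2 = x.2.1 * x.2.2.1).card

namespace SingAux

open ArithmeticFunction Real
open scoped ArithmeticFunction.Moebius

/-- quadruples (u,v,e,f) with all four products ≤ N -/
def quadA (N : ℕ) : Finset (ℕ × ℕ × ℕ × ℕ) :=
  (Finset.Icc 1 N ×ˢ Finset.Icc 1 N ×ˢ Finset.Icc 1 N ×ˢ Finset.Icc 1 N).filter
    fun x => x.2.2.1 * x.1 ≤ N ∧ x.2.2.1 * x.2.1 ≤ N ∧ x.2.2.2 * x.1 ≤ N ∧ x.2.2.2 * x.2.1 ≤ N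

/-- quadruples (u,v,e,f) with all four products ≤ H (explicit box filter form) -/
def quadC (H : ℕ) : Finset (ℕ × ℕ × ℕ × ℕ) :=
  (Finset.Icc 1 H ×ˢ Finset.Icc 1 H ×ˢ Finset.Icc 1 H ×ˢ Finset.Icc 1 H).filter
    fun x => x.2.2.1 * x.1 ≤ H ∧ x.2.2.1 * x.2.1 ≤ H ∧ x.2.2.2 * x.1 ≤ H ∧ x.2.2.2 * x.2.1 ≤ H

/-- quadruples (u,v,e,f) with gcd(u,v)=1 and all four products ≤ H -/
def quadB (H : ℕ) : Finset (ℕ × ℕ × ℕ × ℕ) :=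
  (Finset.Icc 1 H ×ˢ Finset.Icc 1 H ×ˢ Finset.Icc 1 H ×ˢ Finset.Icc 1 H).filter
    fun x => Nat.gcd x.1 x.2.1 = 1 ∧
      x.2.2.1 * x.1 ≤ H ∧ x.2.2.1 * x.2.1 ≤ H ∧ x.2.2.2 * x.1 ≤ H ∧ x.2.2.2 * x.2.1 ≤ H

lemma singCount_eq_cardB (H : ℕ) : singCount H = (quadB H).card := by
  rw [singCount]
  refine (Finset.card_bij
    (fun x _ => (x.2.2.1 * x.1, x.2.2.1 * x.2.1, x.2.2.2 * x.1, x.2.2.2 * x.2.1))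
    ?_ ?_ ?_).symm
  · rintro ⟨u, v, e, f⟩ hx
    simp only [quadB, Finset.mem_filter, Finset.mem_product, Finset.mem_Icc] at hx
    obtain ⟨⟨⟨hu1, huH⟩, ⟨hv1, hvH⟩, ⟨he1, heH⟩, hf1, hfH⟩, hcop, h1, h2, h3, h4⟩ := hx
    simp only [Finset.mem_filter, Finset.mem_product, Finset.mem_Icc]
    exact ⟨⟨⟨Nat.mul_pos he1 hu1, h1⟩, ⟨Nat.mul_pos he1 hv1, h2⟩,
      ⟨Nat.mul_pos hf1 hu1, h3⟩, Nat.mul_pos hf1 hv1, h4⟩, by ring⟩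
  · rintro ⟨u, v, e, f⟩ hx ⟨u', v', e', f'⟩ hy h
    simp only [Prod.mk.injEq] at h
    obtain ⟨h1, h2, h3, h4⟩ := h
    simp only [quadB, Finset.mem_filter, Finset.mem_product, Finset.mem_Icc] at hx hy
    obtain ⟨⟨⟨hu1, _⟩, ⟨hv1, _⟩, ⟨he1, _⟩, hf1, _⟩, hcop, _⟩ := hx
    obtain ⟨⟨⟨hu1', _⟩, ⟨hv1', _⟩, ⟨he1', _⟩, hf1', _⟩, hcop', _⟩ := hy
    have he : e = e' := by
      calc e = Nat.gcd (e * u) (e * v) := by rw [Nat.gcd_mul_left, hcop, mul_one]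
        _ = Nat.gcd (e' * u') (e' * v') := by rw [h1, h2]
        _ = e' := by rw [Nat.gcd_mul_left, hcop', mul_one]
    subst he
    have hu : u = u' := Nat.eq_of_mul_eq_mul_left (by omega) h1
    have hv : v = v' := Nat.eq_of_mul_eq_mul_left (by omega) h2
    subst hu; subst hv
    have hf : f = f' := by
      have : u * f = u * f' := by
        rw [mul_comm u f, mul_comm u f']; exact h3
      exact Nat.eq_of_mul_eq_mul_left (by omega) this
    rw [hf]
  · rintro ⟨a, b, c, d⟩ hx
    simp only [Finset.mem_filter, Finset.mem_product, Finset.mem_Icc] at hx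
    obtain ⟨⟨⟨ha1, haH⟩, ⟨hb1, hbH⟩, ⟨hc1, hcH⟩, hd1, hdH⟩, habcd⟩ := hx
    set g := Nat.gcd a b with hg
    have hg0 : 0 < g := Nat.gcd_pos_of_pos_left b (by omega)
    set u := a / g with hu
    set v := b / g with hv
    have hau : g * u = a := Nat.mul_div_cancel' (Nat.gcd_dvd_left a b)
    have hbv : g * v = b := Nat.mul_div_cancel' (Nat.gcd_dvd_right a b)
    have hcop : Nat.gcd u v = 1 := Nat.coprime_div_gcd_div_gcd hg0
    have hu1 : 1 ≤ u := by
      rcases Nat.eq_zero_or_pos u with h0 | h0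
      · rw [h0, mul_zero] at hau; omega
      · exact h0
    have hv1 : 1 ≤ v := by
      rcases Nat.eq_zero_or_pos v with h0 | h0
      · rw [h0, mul_zero] at hbv; omega
      · exact h0
    have hud : u * d = v * c := by
      have hh : g * (u * d) = g * (v * c) := by
        rw [← mul_assoc, ← mul_assoc, hau, hbv]; exact habcd
      exact Nat.eq_of_mul_eq_mul_left hg0 hh
    have hvd : v ∣ d := by
      have hdvd : v ∣ u * d := by rw [hud]; exact dvd_mul_right v c
      have hcv : Nat.Coprime v u := Nat.Coprime.symm hcop
      exact hcv.dvd_of_dvd_mul_left hdvd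
    set f := d / v with hf
    have hdf : v * f = d := Nat.mul_div_cancel' hvd
    have hf1 : 1 ≤ f := by
      rcases Nat.eq_zero_or_pos f with h0 | h0
      · rw [h0, mul_zero] at hdf; omega
      · exact h0
    have hcf : f * u = c := by
      have hh : v * (u * f) = v * c := by
        rw [← hud, ← hdf]; ring
      have := Nat.eq_of_mul_eq_mul_left (by omega) hh
      rw [← this]; ring
    have huH : u ≤ H := le_trans (Nat.le_mul_of_pos_left u hg0) (hau ▸ haH)
    have hvH : v ≤ H := le_trans (Nat.le_mul_of_pos_left v hg0) (hbv ▸ hbH)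
    have hgH : g ≤ H := by
      calc g ≤ g * u := Nat.le_mul_of_pos_right g hu1
        _ = a := hau
        _ ≤ H := haH
    have hfH : f ≤ H := by
      calc f ≤ v * f := Nat.le_mul_of_pos_left f hv1
        _ = d := hdf
        _ ≤ H := hdH
    refine ⟨(u, v, g, f), ?_, ?_⟩
    · simp only [quadB, Finset.mem_filter, Finset.mem_product, Finset.mem_Icc]
      refine ⟨⟨⟨hu1, huH⟩, ⟨hv1, hvH⟩, ⟨hg0, hgH⟩, hf1, hfH⟩, hcop, ?_, ?_, ?_, ?_⟩
      · rw [hau]; exact haH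
      · rw [hbv]; exact hbH
      · rw [hcf]; exact hcH
      · rw [mul_comm f v, hdf]; exact hdH
    · simp only [Prod.mk.injEq]
      exact ⟨hau, hbv, hcf, by rw [mul_comm f v]; exact hdf⟩

def quadD (H d : ℕ) : Finset (ℕ × ℕ × ℕ × ℕ) :=
  (Finset.Icc 1 H ×ˢ Finset.Icc 1 H ×ˢ Finset.Icc 1 H ×ˢ Finset.Icc 1 H).filter
    fun x => (d ∣ x.1 ∧ d ∣ x.2.1) ∧
      x.2.2.1 * x.1 ≤ H ∧ x.2.2.1 * x.2.1 ≤ H ∧ x.2.2.2 * x.1 ≤ H ∧ x.2.2.2 * x.2.1 ≤ H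

lemma cardA_div (H d : ℕ) (hd : 1 ≤ d) (hdH : d ≤ H) :
    (quadA (H / d)).card = (quadD H d).card := by
  have hd0 : 0 < d := hd
  refine Finset.card_bij (fun x _ => (d * x.1, d * x.2.1, x.2.2.1, x.2.2.2)) ?_ ?_ ?_
  · rintro ⟨u, v, e, f⟩ hx
    simp only [quadA, Finset.mem_filter, Finset.mem_product, Finset.mem_Icc] at hx
    obtain ⟨⟨⟨hu1, huN⟩, ⟨hv1, hvN⟩, ⟨he1, heN⟩, hf1, hfN⟩, h1, h2, h3, h4⟩ := hx
    simp only [quadD, Finset.mem_filter, Finset.mem_product, Finset.mem_Icc]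
    have hdiv : ∀ k, k ≤ H / d → d * k ≤ H := by
      intro k hk
      calc d * k ≤ d * (H / d) := Nat.mul_le_mul_left d hk
        _ ≤ H := Nat.mul_div_le H d
    have hHdH : H / d ≤ H := Nat.div_le_self H d
    have hcond : ∀ e' u', e' * u' ≤ H / d → e' * (d * u') ≤ H := by
      intro e' u' h
      have : e' * u' * d ≤ H := (Nat.le_div_iff_mul_le hd0).mp h
      calc e' * (d * u') = e' * u' * d := by ring
        _ ≤ H := this
    exact ⟨⟨⟨Nat.mul_pos hd0 hu1, hdiv u huN⟩, ⟨Nat.mul_pos hd0 hv1, hdiv v hvN⟩,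
      ⟨he1, le_trans heN hHdH⟩, hf1, le_trans hfN hHdH⟩,
      ⟨Dvd.intro u rfl, Dvd.intro v rfl⟩, hcond e u h1, hcond e v h2, hcond f u h3, hcond f v h4⟩
  · rintro ⟨u, v, e, f⟩ hx ⟨u', v', e', f'⟩ hy h
    simp only [Prod.mk.injEq] at h
    obtain ⟨h1, h2, h3, h4⟩ := h
    have hu : u = u' := Nat.eq_of_mul_eq_mul_left hd0 h1
    have hv : v = v' := Nat.eq_of_mul_eq_mul_left hd0 h2
    simp [hu, hv, h3, h4]
  · rintro ⟨U, V, e, f⟩ hx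
    simp only [quadD, Finset.mem_filter, Finset.mem_product, Finset.mem_Icc] at hx
    obtain ⟨⟨⟨hU1, hUH⟩, ⟨hV1, hVH⟩, ⟨he1, heH⟩, hf1, hfH⟩, ⟨hdU, hdV⟩, h1, h2, h3, h4⟩ := hx
    set u := U / d with hu
    set v := V / d with hv
    have hUu : d * u = U := Nat.mul_div_cancel' hdU
    have hVv : d * v = V := Nat.mul_div_cancel' hdV
    have hu1 : 1 ≤ u := by
      rcases Nat.eq_zero_or_pos u with h0 | h0
      · rw [h0, mul_zero] at hUu; omega
      · exact h0
    have hv1 : 1 ≤ v := by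
      rcases Nat.eq_zero_or_pos v with h0 | h0
      · rw [h0, mul_zero] at hVv; omega
      · exact h0
    have hcond : ∀ e' u' U', d * u' = U' → e' * U' ≤ H → e' * u' ≤ H / d := by
      intro e' u' U' hEq hle
      rw [Nat.le_div_iff_mul_le hd0]
      calc e' * u' * d = e' * (d * u') := by ring
        _ = e' * U' := by rw [hEq]
        _ ≤ H := hle
    have h1' : e * u ≤ H / d := hcond e u U hUu h1
    have h2' : e * v ≤ H / d := hcond e v V hVv h2
    have h3' : f * u ≤ H / d := hcond f u U hUu h3
    have h4' : f * v ≤ H / d := hcond f v V hVv h4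
    refine ⟨(u, v, e, f), ?_, ?_⟩
    · simp only [quadA, Finset.mem_filter, Finset.mem_product, Finset.mem_Icc]
      refine ⟨⟨⟨hu1, ?_⟩, ⟨hv1, ?_⟩, ⟨he1, ?_⟩, hf1, ?_⟩, h1', h2', h3', h4'⟩
      · exact le_trans (Nat.le_mul_of_pos_left u he1) h1'
      · exact le_trans (Nat.le_mul_of_pos_left v he1) h2'
      · exact le_trans (Nat.le_mul_of_pos_right e hu1) h1'
      · exact le_trans (Nat.le_mul_of_pos_right f hu1) h3'
    · simp only [Prod.mk.injEq]
      simp [hUu, hVv]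

lemma quadB_eq (H : ℕ) :
    quadB H = (quadC H).filter (fun x => Nat.gcd x.1 x.2.1 = 1) := by
  rw [quadB, quadC, Finset.filter_filter]
  exact Finset.filter_congr (fun x _ => by tauto)

lemma quadD_eq (H d : ℕ) :
    quadD H d = (quadC H).filter (fun x => d ∣ x.1 ∧ d ∣ x.2.1) := by
  rw [quadD, quadC, Finset.filter_filter]
  exact Finset.filter_congr (fun x _ => by tauto)

lemma card_filter_int {α : Type*} (s : Finset α) (p : α → Prop) [DecidablePred p] :
    (((s.filter p).card : ℤ)) = ∑ x ∈ s, if p x then (1:ℤ) else 0 := by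
  rw [Finset.card_filter, Nat.cast_sum]
  exact Finset.sum_congr rfl (fun x _ => by split <;> simp)

lemma cardB_eq_sum (H : ℕ) :
    ((quadB H).card : ℤ) = ∑ d ∈ Finset.Icc 1 H, μ d * ((quadA (H / d)).card : ℤ) := by
  have hD : ∀ d ∈ Finset.Icc 1 H, μ d * ((quadA (H / d)).card : ℤ)
      = μ d * ∑ x ∈ quadC H, (if d ∣ x.1 ∧ d ∣ x.2.1 then (1:ℤ) else 0) := by
    intro d hd
    simp only [Finset.mem_Icc] at hd
    rw [cardA_div H d hd.1 hd.2, quadD_eq, card_filter_int]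
  rw [Finset.sum_congr rfl hD]
  simp_rw [Finset.mul_sum]
  rw [Finset.sum_comm]
  have hinner : ∀ x ∈ quadC H,
      (∑ d ∈ Finset.Icc 1 H, μ d * (if d ∣ x.1 ∧ d ∣ x.2.1 then (1:ℤ) else 0))
        = if Nat.gcd x.1 x.2.1 = 1 then (1:ℤ) else 0 := by
    intro x hx
    simp only [quadC, Finset.mem_filter, Finset.mem_product, Finset.mem_Icc] at hx
    obtain ⟨⟨⟨hu1, huH⟩, ⟨hv1, _⟩, _, _⟩, _⟩ := hx
    have hstep : ∀ d ∈ Finset.Icc 1 H, μ d * (if d ∣ x.1 ∧ d ∣ x.2.1 then (1:ℤ) else 0)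
        = if d ∣ x.1 ∧ d ∣ x.2.1 then (μ d : ℤ) else 0 := by
      intro d _
      split <;> simp
    rw [Finset.sum_congr rfl hstep, ← Finset.sum_filter]
    have hgcd0 : 0 < Nat.gcd x.1 x.2.1 := Nat.gcd_pos_of_pos_left _ (by omega)
    have hset : (Finset.Icc 1 H).filter (fun d => d ∣ x.1 ∧ d ∣ x.2.1)
        = (Nat.gcd x.1 x.2.1).divisors := by
      ext d
      simp only [Finset.mem_filter, Finset.mem_Icc, Nat.mem_divisors, Nat.dvd_gcd_iff]
      constructor
      · rintro ⟨⟨hd1, hdH⟩, h⟩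
        exact ⟨h, by omega⟩
      · rintro ⟨⟨hdu, hdv⟩, _⟩
        have hd0 : d ≠ 0 := by
          rintro rfl
          rw [zero_dvd_iff] at hdu
          omega
        have hdle : d ≤ x.1 := Nat.le_of_dvd (by omega) hdu
        exact ⟨⟨by omega, le_trans hdle huH⟩, hdu, hdv⟩
    rw [hset]
    have hmz := congrArg (fun (F : ArithmeticFunction ℤ) => F (Nat.gcd x.1 x.2.1))
      ArithmeticFunction.moebius_mul_coe_zeta
    simp only [ArithmeticFunction.coe_mul_zeta_apply, ArithmeticFunction.one_apply] at hmz
    exact hmz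
  rw [Finset.sum_congr rfl hinner, quadB_eq, card_filter_int]

lemma sum_max (g : ℕ → ℕ) (N : ℕ) :
    ∑ u ∈ Finset.Icc 1 N, ∑ v ∈ Finset.Icc 1 N, g (max u v)
      = ∑ m ∈ Finset.Icc 1 N, (2 * m - 1) * g m := by
  induction N with
  | zero => simp
  | succ n ih =>
    have hins : Finset.Icc 1 (n+1) = insert (n+1) (Finset.Icc 1 n) := by
      ext x; simp; omega
    have hnot : (n+1) ∉ Finset.Icc 1 n := by simp
    rw [hins, Finset.sum_insert hnot, Finset.sum_insert hnot, Finset.sum_insert hnot,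
      Finset.sum_congr rfl (fun x (hx : x ∈ Finset.Icc 1 n) => Finset.sum_insert hnot)]
    have h1 : ∑ v ∈ Finset.Icc 1 n, g (max (n+1) v) = n * g (n+1) := by
      rw [Finset.sum_congr rfl (fun v hv => by
        rw [max_eq_left (by simp at hv; omega)]), Finset.sum_const, Nat.card_Icc]
      simp [Nat.mul_comm]
    have h2 : ∀ u ∈ Finset.Icc 1 n,
        (g (max u (n+1)) + ∑ v ∈ Finset.Icc 1 n, g (max u v))
          = g (n+1) + ∑ v ∈ Finset.Icc 1 n, g (max u v) := by
      intro u hu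
      rw [max_eq_right (by simp at hu; omega)]
    rw [Finset.sum_congr rfl h2, Finset.sum_add_distrib, Finset.sum_const, Nat.card_Icc, ih,
      max_self, h1]
    have h3 : 2 * (n+1) - 1 = 2*n+1 := by omega
    rw [h3]
    simp only [Nat.add_sub_cancel, smul_eq_mul]
    ring

lemma count_ef (N u v : ℕ) (hu : u ∈ Finset.Icc 1 N) (hv : v ∈ Finset.Icc 1 N) :
    (Finset.Icc 1 N).filter (fun e => e * u ≤ N ∧ e * v ≤ N)
      = Finset.Icc 1 (N / max u v) := by
  simp only [Finset.mem_Icc] at hu hv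
  ext e
  simp only [Finset.mem_filter, Finset.mem_Icc]
  constructor
  · rintro ⟨⟨h1, _⟩, h3, h4⟩
    refine ⟨h1, ?_⟩
    rw [Nat.le_div_iff_mul_le (by omega : 0 < max u v)]
    rcases le_total u v with h | h
    · rw [max_eq_right h]; exact h4
    · rw [max_eq_left h]; exact h3
  · rintro ⟨h1, h2⟩
    rw [Nat.le_div_iff_mul_le (by omega : 0 < max u v)] at h2
    have hu' : e * u ≤ N := le_trans (Nat.mul_le_mul_left e (le_max_left u v)) h2
    have hv' : e * v ≤ N := le_trans (Nat.mul_le_mul_left e (le_max_right u v)) h2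
    have heN : e ≤ N := le_trans (Nat.le_mul_of_pos_right e (by omega)) hu'
    exact ⟨⟨h1, heN⟩, hu', hv'⟩

lemma cardA_eq_sum (N : ℕ) :
    (quadA N).card = ∑ m ∈ Finset.Icc 1 N, (2 * m - 1) * (N / m) ^ 2 := by
  rw [quadA, Finset.card_filter]
  rw [Finset.sum_product]
  simp only [Finset.sum_product]
  have key : ∀ u ∈ Finset.Icc 1 N, ∀ v ∈ Finset.Icc 1 N,
      (∑ e ∈ Finset.Icc 1 N, ∑ f ∈ Finset.Icc 1 N,
        if e * u ≤ N ∧ e * v ≤ N ∧ f * u ≤ N ∧ f * v ≤ N then 1 else 0)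
        = (N / max u v) ^ 2 := by
    intro u hu v hv
    have hsplit : ∀ e f : ℕ,
        (if e * u ≤ N ∧ e * v ≤ N ∧ f * u ≤ N ∧ f * v ≤ N then (1:ℕ) else 0)
          = (if e * u ≤ N ∧ e * v ≤ N then 1 else 0) *
            (if f * u ≤ N ∧ f * v ≤ N then 1 else 0) := by
      intro e f
      by_cases h1 : e * u ≤ N ∧ e * v ≤ N <;> by_cases h2 : f * u ≤ N ∧ f * v ≤ N <;>
        simp [h1, h2] <;> tauto
    simp only [hsplit]
    rw [← Finset.sum_mul_sum]
    rw [Finset.sum_boole, count_ef N u v hu hv, Nat.card_Icc]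
    simp [sq, Nat.cast_id]
  rw [Finset.sum_congr rfl (fun u hu => Finset.sum_congr rfl (fun v hv => key u hu v hv))]
  exact sum_max (fun m => (N / m) ^ 2) N

lemma sum_inv_sq_le' (N : ℕ) (h : 1 ≤ N) :
    ∑ m ∈ Finset.Icc 1 N, (1 : ℝ) / (m : ℝ) ^ 2 ≤ 2 - 1 / (N : ℝ) := by
  induction N, h using Nat.le_induction with
  | base => norm_num
  | succ n hn ih =>
    rw [Finset.sum_Icc_succ_top (by omega)]
    have hn0 : (0 : ℝ) < (n : ℝ) := by exact_mod_cast hn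
    have key : (1 : ℝ) / ((n : ℝ) + 1) ^ 2 ≤ 1 / (n : ℝ) - 1 / ((n : ℝ) + 1) := by
      rw [div_sub_div _ _ (ne_of_gt hn0) (by positivity), div_le_div_iff₀ (by positivity) (by positivity)]
      ring_nf
      nlinarith
    push_cast
    linarith

lemma sum_inv_sq_le (N : ℕ) : ∑ m ∈ Finset.Icc 1 N, (1 : ℝ) / (m : ℝ) ^ 2 ≤ 2 := by
  rcases Nat.eq_zero_or_pos N with rfl | h
  · simp
  · have := sum_inv_sq_le' N h
    have h0 : (0 : ℝ) < (N : ℝ) := by exact_mod_cast h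
    have : (0:ℝ) ≤ 1 / (N:ℝ) := by positivity
    linarith [sum_inv_sq_le' N h]

lemma log_le_two_sqrt {x : ℝ} (hx : 1 ≤ x) : Real.log x ≤ 2 * Real.sqrt x := by
  have h0 : (0:ℝ) < x := by linarith
  have h1 : Real.log (Real.sqrt x) = Real.log x / 2 := Real.log_sqrt (le_of_lt h0)
  have h2 : Real.log (Real.sqrt x) ≤ Real.sqrt x - 1 :=
    Real.log_le_sub_one_of_pos (Real.sqrt_pos.mpr h0)
  have h3 : (0:ℝ) ≤ Real.sqrt x := Real.sqrt_nonneg x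
  linarith

lemma sum_log_div_sq_le' (N : ℕ) (h : 1 ≤ N) :
    ∑ m ∈ Finset.Icc 1 N, Real.log m / (m : ℝ) ^ 2 ≤ 6 - 4 / Real.sqrt N := by
  induction N, h using Nat.le_induction with
  | base => norm_num
  | succ n hn ih =>
    rw [Finset.sum_Icc_succ_top (by omega)]
    have hn0 : (0 : ℝ) < (n : ℝ) := by exact_mod_cast hn
    set a := Real.sqrt n with ha
    set b := Real.sqrt ((n : ℝ) + 1) with hb
    have ha2 : a ^ 2 = (n : ℝ) := Real.sq_sqrt (le_of_lt hn0)
    have hb2 : b ^ 2 = (n : ℝ) + 1 := Real.sq_sqrt (by linarith)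
    have ha1 : 1 ≤ a := by
      rw [ha]
      have := Real.sqrt_le_sqrt (show (1:ℝ) ≤ (n:ℝ) by exact_mod_cast hn)
      simpa using this
    have hb0 : 0 < b := Real.sqrt_pos.mpr (by linarith)
    have hab : a ≤ b := Real.sqrt_le_sqrt (by linarith)
    have hlog : Real.log ((n : ℝ) + 1) ≤ 2 * b := by
      have := log_le_two_sqrt (show (1:ℝ) ≤ (n:ℝ)+1 by linarith)
      simpa [hb] using this
    have key : Real.log ((n : ℝ) + 1) / ((n : ℝ) + 1) ^ 2 ≤ 4 / a - 4 / b := by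
      have hstep : 2 * b / ((n : ℝ) + 1) ^ 2 ≤ 4 / a - 4 / b := by
        rw [div_sub_div _ _ (by positivity) (ne_of_gt hb0), ← hb2,
          div_le_div_iff₀ (by positivity) (by positivity)]
        have hbb : b * b = (n : ℝ) + 1 := by nlinarith
        have haa : a * a = (n : ℝ) := by nlinarith
        nlinarith [sq_nonneg (a*b - (n:ℝ) - 2), mul_pos (mul_pos hb0 hb0) hb0,
          mul_le_mul_of_nonneg_left hab (le_of_lt hb0)]
      calc Real.log ((n : ℝ) + 1) / ((n : ℝ) + 1) ^ 2
          ≤ 2 * b / ((n : ℝ) + 1) ^ 2 := by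
            apply div_le_div_of_nonneg_right hlog (by positivity) |>.trans_eq rfl
        _ ≤ 4 / a - 4 / b := hstep
    push_cast
    linarith

lemma sum_log_div_sq_le (N : ℕ) :
    ∑ m ∈ Finset.Icc 1 N, Real.log m / (m : ℝ) ^ 2 ≤ 6 := by
  rcases Nat.eq_zero_or_pos N with rfl | h
  · simp
  · have h4 : (0:ℝ) ≤ 4 / Real.sqrt N := by positivity
    linarith [sum_log_div_sq_le' N h]

set_option maxHeartbeats 1000000 in
lemma cardA_est (N : ℕ) (hN : 1 ≤ N) :
    |((quadA N).card : ℝ) - 2 * (N : ℝ) ^ 2 * Real.log N| ≤ 12 * (N : ℝ) ^ 2 := by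
  have hNR : (1:ℝ) ≤ (N:ℝ) := by exact_mod_cast hN
  have hcast : ((quadA N).card : ℝ)
      = ∑ m ∈ Finset.Icc 1 N, ((2*m-1 : ℕ) : ℝ) * ((N/m : ℕ) : ℝ)^2 := by
    rw [cardA_eq_sum N]
    rw [Nat.cast_sum]
    exact Finset.sum_congr rfl (fun m _ => by push_cast [Nat.cast_mul, Nat.cast_pow]; ring)
  set A := ∑ m ∈ Finset.Icc 1 N, ((2*m-1 : ℕ) : ℝ) * ((N/m : ℕ) : ℝ)^2 with hA
  set B := ∑ m ∈ Finset.Icc 1 N, (2*(N:ℝ)^2/(m:ℝ) - (N:ℝ)^2/(m:ℝ)^2) with hB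
  -- pointwise facts
  have hpt : ∀ m ∈ Finset.Icc 1 N,
      |((2*m-1 : ℕ) : ℝ) * ((N/m : ℕ) : ℝ)^2 - (2*(N:ℝ)^2/(m:ℝ) - (N:ℝ)^2/(m:ℝ)^2)|
        ≤ 4 * (N:ℝ) := by
    intro m hm
    simp only [Finset.mem_Icc] at hm
    obtain ⟨hm1, hmN⟩ := hm
    have hm0 : (0:ℝ) < (m:ℝ) := by exact_mod_cast hm1
    set q := ((N/m : ℕ) : ℝ) with hq
    have hcoef : ((2*m-1 : ℕ) : ℝ) = 2*(m:ℝ) - 1 := by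
      have : 1 ≤ 2*m := by omega
      push_cast [Nat.cast_sub this]
      ring
    have hql : q ≤ (N:ℝ)/(m:ℝ) := Nat.cast_div_le
    have hqu : (N:ℝ)/(m:ℝ) ≤ q + 1 := by
      have h1 := Nat.div_add_mod N m
      have h2 : N % m < m := Nat.mod_lt N (by omega)
      have h3 : N < m * (N/m) + m := by omega
      have h4 : (N:ℝ) < (m:ℝ) * q + (m:ℝ) := by
        rw [hq]; exact_mod_cast h3
      rw [div_le_iff₀ hm0]
      nlinarith
    have hq1 : (1:ℝ) ≤ q := by
      have h5 : 1 ≤ N/m := (Nat.one_le_div_iff (by omega)).mpr hmN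
      rw [hq]
      exact_mod_cast h5
    have hxval : (2*(m:ℝ) - 1) * ((N:ℝ)/(m:ℝ))^2 = 2*(N:ℝ)^2/(m:ℝ) - (N:ℝ)^2/(m:ℝ)^2 := by
      field_simp
    rw [hcoef, ← hxval]
    set x := (N:ℝ)/(m:ℝ) with hx
    have hxm : x * (m:ℝ) = (N:ℝ) := by
      rw [hx]; field_simp
    have hmN' : (m:ℝ) ≤ (N:ℝ) := by exact_mod_cast hmN
    have hfac : (0:ℝ) ≤ (2*(m:ℝ)-1) * ((x - q) * (x + q)) :=
      mul_nonneg (by linarith) (mul_nonneg (by linarith) (by linarith))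
    rw [abs_sub_comm, abs_of_nonneg (by nlinarith)]
    nlinarith [mul_le_mul_of_nonneg_left (show x - q ≤ 1 by linarith)
      (show (0:ℝ) ≤ 2*(m:ℝ)-1 by linarith)]
  have hAB : |A - B| ≤ 4 * (N:ℝ)^2 := by
    rw [hA, hB, ← Finset.sum_sub_distrib]
    calc |∑ m ∈ Finset.Icc 1 N, (((2*m-1 : ℕ) : ℝ) * ((N/m : ℕ) : ℝ)^2
            - (2*(N:ℝ)^2/(m:ℝ) - (N:ℝ)^2/(m:ℝ)^2))|
        ≤ ∑ m ∈ Finset.Icc 1 N, |((2*m-1 : ℕ) : ℝ) * ((N/m : ℕ) : ℝ)^2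
            - (2*(N:ℝ)^2/(m:ℝ) - (N:ℝ)^2/(m:ℝ)^2)| := Finset.abs_sum_le_sum_abs _ _
      _ ≤ ∑ m ∈ Finset.Icc 1 N, 4 * (N:ℝ) := Finset.sum_le_sum hpt
      _ ≤ 4 * (N:ℝ)^2 := by
          rw [Finset.sum_const, Nat.card_Icc]
          simp only [Nat.add_sub_cancel, nsmul_eq_mul]
          nlinarith
  -- B in terms of harmonic sums
  have hS1 : ∑ m ∈ Finset.Icc 1 N, (1:ℝ)/(m:ℝ) = (harmonic N : ℝ) := by
    rw [harmonic_eq_sum_Icc]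
    push_cast
    exact Finset.sum_congr rfl (fun m _ => (one_div _))
  have hBval : B = 2*(N:ℝ)^2 * (harmonic N : ℝ)
      - (N:ℝ)^2 * ∑ m ∈ Finset.Icc 1 N, (1:ℝ)/(m:ℝ)^2 := by
    rw [hB, Finset.sum_sub_distrib, ← hS1]
    congr 1
    · rw [Finset.mul_sum]
      exact Finset.sum_congr rfl (fun m _ => by ring)
    · rw [Finset.mul_sum]
      exact Finset.sum_congr rfl (fun m _ => by ring)
  have hharm_lb : Real.log N ≤ (harmonic N : ℝ) := by
    have h1 := log_add_one_le_harmonic N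
    have h2 : Real.log N ≤ Real.log (N+1) := by
      apply Real.log_le_log (by linarith)
      push_cast; linarith
    push_cast at h1
    linarith
  have hharm_ub : (harmonic N : ℝ) ≤ 1 + Real.log N := harmonic_le_one_add_log N
  have hS2 : (0:ℝ) ≤ ∑ m ∈ Finset.Icc 1 N, (1:ℝ)/(m:ℝ)^2 :=
    Finset.sum_nonneg (fun m _ => by positivity)
  have hS2' := sum_inv_sq_le N
  have hBmain : |B - 2 * (N : ℝ) ^ 2 * Real.log N| ≤ 4 * (N:ℝ)^2 := by
    rw [hBval]
    rw [abs_le]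
    constructor <;> nlinarith
  calc |((quadA N).card : ℝ) - 2 * (N : ℝ) ^ 2 * Real.log N|
      = |(A - B) + (B - 2 * (N : ℝ) ^ 2 * Real.log N)| := by rw [hcast]; ring_nf
    _ ≤ |A - B| + |B - 2 * (N : ℝ) ^ 2 * Real.log N| := abs_add_le _ _
    _ ≤ 12 * (N : ℝ) ^ 2 := by nlinarith [sq_nonneg ((N:ℝ))]

open scoped LSeries.notation in
lemma moebius_hasSum : HasSum (fun d : ℕ => (μ d : ℝ) / (d : ℝ) ^ 2) (6 / Real.pi ^ 2) := by
  have h2 : (1:ℝ) < (2:ℂ).re := by norm_num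
  have hsum : LSeriesSummable ↗μ 2 := ArithmeticFunction.LSeriesSummable_moebius_iff.mpr h2
  have hmul := LSeries_one_mul_Lseries_moebius (s := 2) h2
  have hzeta : LSeries 1 2 = (Real.pi : ℂ) ^ 2 / 6 := by
    rw [LSeries_one_eq_riemannZeta h2]
    exact_mod_cast riemannZeta_two
  have hpi : (Real.pi : ℂ) ≠ 0 := by exact_mod_cast Real.pi_ne_zero
  have hLmu : LSeries ↗μ 2 = ((6 / Real.pi ^ 2 : ℝ) : ℂ) := by
    rw [hzeta] at hmul
    push_cast
    field_simp at hmul ⊢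
    linear_combination hmul
  have hH : HasSum (fun n => LSeries.term ↗μ 2 n) ((6 / Real.pi ^ 2 : ℝ) : ℂ) := by
    have h := hsum.hasSum
    rwa [show ∑' n, LSeries.term ↗μ 2 n = LSeries ↗μ 2 from rfl, hLmu] at h
  have hterm : ∀ n : ℕ, LSeries.term ↗μ 2 n = (((μ n : ℝ) / (n : ℝ) ^ 2 : ℝ) : ℂ) := by
    intro n
    rcases eq_or_ne n 0 with rfl | hn
    · simp [LSeries.term]
    · rw [LSeries.term_of_ne_zero hn, show ((2:ℂ)) = ((2:ℕ):ℂ) by norm_num,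
        Complex.cpow_natCast]
      push_cast
      ring
  rw [funext hterm] at hH
  exact Complex.hasSum_ofReal.mp hH

set_option maxHeartbeats 1000000 in
lemma moebius_partial (H : ℕ) (hH : 1 ≤ H) :
    |∑ d ∈ Finset.Icc 1 H, (μ d : ℝ) / (d : ℝ) ^ 2 - 6 / Real.pi ^ 2| ≤ 1 / (H : ℝ) := by
  have hsummable : Summable (fun d : ℕ => (μ d : ℝ) / (d : ℝ) ^ 2) := moebius_hasSum.summable
  have hsum2 : Summable (fun d : ℕ => (1 : ℝ) / (d : ℝ) ^ 2) := by
    have := Real.summable_one_div_nat_pow (p := 2)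
    exact this.mpr (by norm_num)
  have hHpos : (0:ℝ) < (H : ℝ) := by exact_mod_cast hH
  -- partial sum over Icc 1 H = partial sum over range (H+1)
  have hIcc : Finset.Icc 1 H = (Finset.range (H + 1)).erase 0 := by
    ext x; simp [Nat.lt_succ_iff]; omega
  have h0 : ((μ 0 : ℝ) / ((0:ℕ) : ℝ) ^ 2) = 0 := by simp
  have hrange : ∑ d ∈ Finset.Icc 1 H, (μ d : ℝ) / (d : ℝ) ^ 2
      = ∑ d ∈ Finset.range (H + 1), (μ d : ℝ) / (d : ℝ) ^ 2 := by
    rw [hIcc]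
    exact Finset.sum_erase _ (by simpa using h0)
  have hsplit := Summable.sum_add_tsum_nat_add (H + 1) hsummable
  -- tail bound
  have htail_le : ∀ n : ℕ, |(μ (n + (H+1)) : ℝ) / ((n + (H+1) : ℕ) : ℝ) ^ 2|
      ≤ (1 : ℝ) / ((n + (H+1) : ℕ) : ℝ) ^ 2 := by
    intro n
    rw [abs_div, abs_of_nonneg (by positivity : (0:ℝ) ≤ ((n + (H+1) : ℕ) : ℝ) ^ 2)]
    apply div_le_div_of_nonneg_right _ (by positivity)
    · have := ArithmeticFunction.abs_moebius_le_one (n := n + (H+1))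
      exact_mod_cast this
  have hsumtail : Summable (fun n : ℕ => (μ (n + (H+1)) : ℝ) / ((n + (H+1) : ℕ) : ℝ) ^ 2) :=
    (summable_nat_add_iff (H+1)).mpr hsummable
  have hsumtail2 : Summable (fun n : ℕ => (1 : ℝ) / ((n + (H+1) : ℕ) : ℝ) ^ 2) :=
    (summable_nat_add_iff (H+1)).mpr hsum2
  have habs : |∑' n : ℕ, (μ (n + (H+1)) : ℝ) / ((n + (H+1) : ℕ) : ℝ) ^ 2|
      ≤ ∑' n : ℕ, (1 : ℝ) / ((n + (H+1) : ℕ) : ℝ) ^ 2 := by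
    calc |∑' n : ℕ, (μ (n + (H+1)) : ℝ) / ((n + (H+1) : ℕ) : ℝ) ^ 2|
        ≤ ∑' n : ℕ, |(μ (n + (H+1)) : ℝ) / ((n + (H+1) : ℕ) : ℝ) ^ 2| := by
          have hn : Summable (fun n : ℕ => ‖(μ (n + (H+1)) : ℝ) / ((n + (H+1) : ℕ) : ℝ) ^ 2‖) := by
            simpa only [Real.norm_eq_abs] using hsumtail.abs
          simpa only [Real.norm_eq_abs] using norm_tsum_le_tsum_norm hn
      _ ≤ ∑' n : ℕ, (1 : ℝ) / ((n + (H+1) : ℕ) : ℝ) ^ 2 :=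
          Summable.tsum_le_tsum htail_le hsumtail.abs hsumtail2
  have hteles : ∑' n : ℕ, (1 : ℝ) / ((n + (H+1) : ℕ) : ℝ) ^ 2 ≤ 1 / (H : ℝ) := by
    apply Summable.tsum_le_of_sum_le hsumtail2
    intro s
    obtain ⟨m, hm⟩ := s.exists_nat_subset_range
    calc ∑ n ∈ s, (1 : ℝ) / ((n + (H+1) : ℕ) : ℝ) ^ 2
        ≤ ∑ n ∈ Finset.range m, (1 : ℝ) / ((n + (H+1) : ℕ) : ℝ) ^ 2 :=
          Finset.sum_le_sum_of_subset_of_nonneg hm (fun i _ _ => by positivity)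
      _ ≤ ∑ n ∈ Finset.range m, ((1 : ℝ) / ((n + H : ℕ) : ℝ) - 1 / ((n + 1 + H : ℕ) : ℝ)) := by
          apply Finset.sum_le_sum
          intro i _
          have h1 : (0:ℝ) < ((i + H : ℕ) : ℝ) := by
            have : 1 ≤ i + H := by omega
            exact_mod_cast Nat.lt_of_lt_of_le Nat.zero_lt_one this
          have h2 : (0:ℝ) < ((i + 1 + H : ℕ) : ℝ) := by positivity
          rw [div_sub_div _ _ (ne_of_gt h1) (ne_of_gt h2), div_le_div_iff₀ (by positivity) (by positivity)]
          push_cast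
          ring_nf
          nlinarith
      _ = (1 : ℝ) / ((0 + H : ℕ) : ℝ) - 1 / ((m + H : ℕ) : ℝ) := by
          exact Finset.sum_range_sub' (fun k => (1 : ℝ) / ((k + H : ℕ) : ℝ)) m
      _ ≤ 1 / (H : ℝ) := by
          have : (0:ℝ) ≤ 1 / ((m + H : ℕ) : ℝ) := by positivity
          simp only [Nat.zero_add]
          linarith
  have heq : ∑ d ∈ Finset.Icc 1 H, (μ d : ℝ) / (d : ℝ) ^ 2 - 6 / Real.pi ^ 2
      = -(∑' n : ℕ, (μ (n + (H+1)) : ℝ) / ((n + (H+1) : ℕ) : ℝ) ^ 2) := by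
    rw [hrange, ← moebius_hasSum.tsum_eq, ← hsplit]
    push_cast
    ring
  rw [heq, abs_neg]
  exact habs.trans hteles

lemma sum_inv_le (H : ℕ) : ∑ d ∈ Finset.Icc 1 H, (1:ℝ)/(d:ℝ) ≤ 1 + Real.log H := by
  have h1 : ∑ d ∈ Finset.Icc 1 H, (1:ℝ)/(d:ℝ) = (harmonic H : ℝ) := by
    rw [harmonic_eq_sum_Icc]
    push_cast
    exact Finset.sum_congr rfl (fun m _ => one_div _)
  rw [h1]
  exact harmonic_le_one_add_log H

set_option maxHeartbeats 2000000 in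
lemma main_est (H : ℕ) (hH : 1 ≤ H) :
    |(singCount H : ℝ) - 12 / Real.pi ^ 2 * (H : ℝ) ^ 2 * Real.log H| ≤ 200 * (H : ℝ) ^ 2 := by
  have hHR : (1:ℝ) ≤ (H:ℝ) := by exact_mod_cast hH
  have hH0 : (0:ℝ) < (H:ℝ) := by linarith
  have hlogH : 0 ≤ Real.log H := Real.log_nonneg hHR
  have hsqrt : Real.sqrt H * Real.sqrt H = (H:ℝ) := Real.mul_self_sqrt (by positivity)
  have hsqrt1 : (1:ℝ) ≤ Real.sqrt H := by
    rw [show (1:ℝ) = Real.sqrt 1 by simp]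
    exact Real.sqrt_le_sqrt hHR
  have hlog2s : Real.log H ≤ 2 * Real.sqrt H := log_le_two_sqrt hHR
  have hmoeb : ∀ d : ℕ, |(μ d : ℝ)| ≤ 1 := by
    intro d
    exact_mod_cast ArithmeticFunction.abs_moebius_le_one (n := d)
  -- cast identity
  have hS : (singCount H : ℝ)
      = ∑ d ∈ Finset.Icc 1 H, (μ d : ℝ) * ((quadA (H/d)).card : ℝ) := by
    have h1 := congrArg (Int.cast : ℤ → ℝ) (cardB_eq_sum H)
    push_cast at h1
    rw [singCount_eq_cardB]
    exact_mod_cast h1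
  -- step 1 : replace cardA by 2 q^2 log q
  have hST1 : |∑ d ∈ Finset.Icc 1 H, (μ d : ℝ) * ((quadA (H/d)).card : ℝ)
      - ∑ d ∈ Finset.Icc 1 H, (μ d : ℝ) * (2 * ((H/d : ℕ) : ℝ)^2 * Real.log ((H/d : ℕ) : ℝ))|
      ≤ 24 * (H:ℝ)^2 := by
    rw [← Finset.sum_sub_distrib]
    calc |∑ d ∈ Finset.Icc 1 H, ((μ d : ℝ) * ((quadA (H/d)).card : ℝ)
            - (μ d : ℝ) * (2 * ((H/d : ℕ) : ℝ)^2 * Real.log ((H/d : ℕ) : ℝ)))|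
        ≤ ∑ d ∈ Finset.Icc 1 H, |(μ d : ℝ) * ((quadA (H/d)).card : ℝ)
            - (μ d : ℝ) * (2 * ((H/d : ℕ) : ℝ)^2 * Real.log ((H/d : ℕ) : ℝ))| :=
          Finset.abs_sum_le_sum_abs _ _
      _ ≤ ∑ d ∈ Finset.Icc 1 H, 12 * (H:ℝ)^2 * (1/(d:ℝ)^2) := by
          apply Finset.sum_le_sum
          intro d hd
          simp only [Finset.mem_Icc] at hd
          obtain ⟨hd1, hdH⟩ := hd
          have hd0 : (0:ℝ) < (d:ℝ) := by exact_mod_cast hd1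
          have hNd1 : 1 ≤ H / d := (Nat.one_le_div_iff (by omega)).mpr hdH
          have hest := cardA_est (H/d) hNd1
          have hq_le : ((H/d : ℕ) : ℝ) ≤ (H:ℝ)/(d:ℝ) := Nat.cast_div_le
          have hq0 : (0:ℝ) ≤ ((H/d : ℕ) : ℝ) := by positivity
          rw [← mul_sub, abs_mul]
          calc |(μ d : ℝ)| * |((quadA (H/d)).card : ℝ)
                - 2 * ((H/d : ℕ) : ℝ)^2 * Real.log ((H/d : ℕ) : ℝ)|
              ≤ 1 * (12 * ((H/d : ℕ) : ℝ)^2) := by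
                apply mul_le_mul (hmoeb d) hest (abs_nonneg _) zero_le_one
            _ = 12 * ((H/d : ℕ) : ℝ)^2 := by ring
            _ ≤ 12 * ((H:ℝ)/(d:ℝ))^2 := by nlinarith
            _ = 12 * (H:ℝ)^2 * (1/(d:ℝ)^2) := by
                field_simp
      _ = 12 * (H:ℝ)^2 * ∑ d ∈ Finset.Icc 1 H, (1/(d:ℝ)^2) := by
          rw [Finset.mul_sum]
      _ ≤ 24 * (H:ℝ)^2 := by
          have := sum_inv_sq_le H
          nlinarith [sq_nonneg ((H:ℝ))]
  -- step 2 : replace floor by real quotient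
  have hT1T2 : |∑ d ∈ Finset.Icc 1 H, (μ d : ℝ) * (2 * ((H/d : ℕ) : ℝ)^2 * Real.log ((H/d : ℕ) : ℝ))
      - ∑ d ∈ Finset.Icc 1 H, (μ d : ℝ) * (2 * ((H:ℝ)/(d:ℝ))^2 * Real.log ((H:ℝ)/(d:ℝ)))|
      ≤ 30 * (H:ℝ)^2 := by
    rw [← Finset.sum_sub_distrib]
    have hterm : ∀ d ∈ Finset.Icc 1 H,
        |(μ d : ℝ) * (2 * ((H/d : ℕ) : ℝ)^2 * Real.log ((H/d : ℕ) : ℝ))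
          - (μ d : ℝ) * (2 * ((H:ℝ)/(d:ℝ))^2 * Real.log ((H:ℝ)/(d:ℝ)))|
          ≤ 4 * ((H:ℝ)/(d:ℝ)) * Real.log ((H:ℝ)/(d:ℝ)) + 2 * ((H:ℝ)/(d:ℝ)) := by
      intro d hd
      simp only [Finset.mem_Icc] at hd
      obtain ⟨hd1, hdH⟩ := hd
      have hd0 : (0:ℝ) < (d:ℝ) := by exact_mod_cast hd1
      set q := ((H/d : ℕ) : ℝ) with hqdef
      set x := (H:ℝ)/(d:ℝ) with hxdef
      have hNd1 : 1 ≤ H / d := (Nat.one_le_div_iff (by omega)).mpr hdH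
      have hq1 : (1:ℝ) ≤ q := by rw [hqdef]; exact_mod_cast hNd1
      have hq0 : (0:ℝ) < q := by linarith
      have hql : q ≤ x := Nat.cast_div_le
      have hx1 : (1:ℝ) ≤ x := le_trans hq1 hql
      have hx0 : (0:ℝ) < x := by linarith
      have hqu : x ≤ q + 1 := by
        have h1 := Nat.div_add_mod H d
        have h2 : H % d < d := Nat.mod_lt H (by omega)
        have h3 : H < d * (H/d) + d := by omega
        have h4 : (H:ℝ) < (d:ℝ) * q + (d:ℝ) := by
          rw [hqdef]; exact_mod_cast h3
        rw [hxdef, div_le_iff₀ hd0]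
        nlinarith
      have hlogq : 0 ≤ Real.log q := Real.log_nonneg hq1
      have hlogx : 0 ≤ Real.log x := Real.log_nonneg hx1
      have hloglog : Real.log q ≤ Real.log x := Real.log_le_log hq0 hql
      have hmono : q^2 * Real.log q ≤ x^2 * Real.log x := by
        have hsq : q^2 ≤ x^2 := by nlinarith
        calc q^2 * Real.log q ≤ x^2 * Real.log q :=
              mul_le_mul_of_nonneg_right hsq hlogq
          _ ≤ x^2 * Real.log x := mul_le_mul_of_nonneg_left hloglog (by positivity)
      have hlogdiff : Real.log x - Real.log q ≤ (x - q)/q := by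
        have h5 : (0:ℝ) < x/q := by positivity
        have h6 := Real.log_le_sub_one_of_pos h5
        rw [Real.log_div (ne_of_gt hx0) (ne_of_gt hq0)] at h6
        have h7 : x/q - 1 = (x-q)/q := by field_simp
        linarith
      have hkey : x^2 * Real.log x - q^2 * Real.log q
          ≤ 2 * x * Real.log x + x := by
        have hA : x^2 * Real.log x - q^2 * Real.log x ≤ 2 * x * Real.log x := by
          have : x^2 - q^2 ≤ 2*x := by nlinarith
          nlinarith
        have hB : q^2 * Real.log x - q^2 * Real.log q ≤ x := by
          have h8 : q^2 * (Real.log x - Real.log q) ≤ q^2 * ((x-q)/q) := by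
            apply mul_le_mul_of_nonneg_left hlogdiff (by positivity)
          have h9 : q^2 * ((x-q)/q) = q * (x - q) := by field_simp
          nlinarith
        linarith
      rw [← mul_sub, abs_mul]
      calc |(μ d : ℝ)| * |2 * q^2 * Real.log q - 2 * x^2 * Real.log x|
          ≤ 1 * |2 * q^2 * Real.log q - 2 * x^2 * Real.log x| :=
            mul_le_mul_of_nonneg_right (hmoeb d) (abs_nonneg _)
        _ = |2 * x^2 * Real.log x - 2 * q^2 * Real.log q| := by rw [one_mul, abs_sub_comm]
        _ = 2 * x^2 * Real.log x - 2 * q^2 * Real.log q := by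
            rw [abs_of_nonneg]; linarith
        _ ≤ 4 * x * Real.log x + 2 * x := by linarith
    calc |∑ d ∈ Finset.Icc 1 H, ((μ d : ℝ) * (2 * ((H/d : ℕ) : ℝ)^2 * Real.log ((H/d : ℕ) : ℝ))
            - (μ d : ℝ) * (2 * ((H:ℝ)/(d:ℝ))^2 * Real.log ((H:ℝ)/(d:ℝ))))|
        ≤ ∑ d ∈ Finset.Icc 1 H, |(μ d : ℝ) * (2 * ((H/d : ℕ) : ℝ)^2 * Real.log ((H/d : ℕ) : ℝ))
            - (μ d : ℝ) * (2 * ((H:ℝ)/(d:ℝ))^2 * Real.log ((H:ℝ)/(d:ℝ)))| :=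
          Finset.abs_sum_le_sum_abs _ _
      _ ≤ ∑ d ∈ Finset.Icc 1 H, (4 * ((H:ℝ)/(d:ℝ)) * Real.log ((H:ℝ)/(d:ℝ)) + 2 * ((H:ℝ)/(d:ℝ))) :=
          Finset.sum_le_sum hterm
      _ ≤ ∑ d ∈ Finset.Icc 1 H, ((4 * Real.log H + 2) * ((H:ℝ) * (1/(d:ℝ)))) := by
          apply Finset.sum_le_sum
          intro d hd
          simp only [Finset.mem_Icc] at hd
          have hd0 : (0:ℝ) < (d:ℝ) := by exact_mod_cast hd.1
          have hd1 : (1:ℝ) ≤ (d:ℝ) := by exact_mod_cast hd.1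
          have hx0 : (0:ℝ) < (H:ℝ)/(d:ℝ) := by positivity
          have hxH : (H:ℝ)/(d:ℝ) ≤ (H:ℝ) := by
            rw [div_le_iff₀ hd0]; nlinarith
          have hlogle : Real.log ((H:ℝ)/(d:ℝ)) ≤ Real.log H := by
            rcases le_or_gt 1 ((H:ℝ)/(d:ℝ)) with h | h
            · exact Real.log_le_log hx0 hxH
            · calc Real.log ((H:ℝ)/(d:ℝ)) ≤ 0 := Real.log_nonpos (le_of_lt hx0) (le_of_lt h)
                _ ≤ Real.log H := hlogH
          have hlognn : 0 ≤ Real.log ((H:ℝ)/(d:ℝ)) ∨ Real.log ((H:ℝ)/(d:ℝ)) < 0 :=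
            le_or_gt 0 _
          have heq : (H:ℝ) * (1/(d:ℝ)) = (H:ℝ)/(d:ℝ) := by ring
          rw [heq]
          rcases hlognn with h | h
          · nlinarith
          · nlinarith
      _ = (4 * Real.log H + 2) * ((H:ℝ) * ∑ d ∈ Finset.Icc 1 H, (1/(d:ℝ))) := by
          rw [Finset.mul_sum, Finset.mul_sum]
      _ ≤ 30 * (H:ℝ)^2 := by
          have h1 := sum_inv_le H
          have h2 : (0:ℝ) ≤ ∑ d ∈ Finset.Icc 1 H, (1/(d:ℝ)) :=
            Finset.sum_nonneg (fun d _ => by positivity)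
          have h3 : (4 * Real.log H + 2) * ((H:ℝ) * ∑ d ∈ Finset.Icc 1 H, (1/(d:ℝ)))
              ≤ (4 * Real.log H + 2) * ((H:ℝ) * (1 + Real.log H)) := by
            apply mul_le_mul_of_nonneg_left _ (by linarith)
            apply mul_le_mul_of_nonneg_left h1 (by linarith)
          have h4 : (4 * Real.log H + 2) * ((H:ℝ) * (1 + Real.log H)) ≤ 30 * (H:ℝ)^2 := by
            nlinarith [mul_le_mul_of_nonneg_left hlog2s (le_of_lt hH0),
              mul_le_mul_of_nonneg_left hsqrt1 (le_of_lt hH0), sq_nonneg ((H:ℝ) - Real.sqrt H)]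
          linarith
  -- step 3 : split logarithm
  have hT2 : ∑ d ∈ Finset.Icc 1 H, (μ d : ℝ) * (2 * ((H:ℝ)/(d:ℝ))^2 * Real.log ((H:ℝ)/(d:ℝ)))
      = 2 * (H:ℝ)^2 * Real.log H * (∑ d ∈ Finset.Icc 1 H, (μ d : ℝ)/(d:ℝ)^2)
        - 2 * (H:ℝ)^2 * (∑ d ∈ Finset.Icc 1 H, (μ d : ℝ) * Real.log d / (d:ℝ)^2) := by
    rw [Finset.mul_sum, Finset.mul_sum, ← Finset.sum_sub_distrib]
    apply Finset.sum_congr rfl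
    intro d hd
    simp only [Finset.mem_Icc] at hd
    have hd0 : (0:ℝ) < (d:ℝ) := by exact_mod_cast hd.1
    rw [Real.log_div (ne_of_gt hH0) (ne_of_gt hd0)]
    field_simp
  have hS2abs : |∑ d ∈ Finset.Icc 1 H, (μ d : ℝ) * Real.log d / (d:ℝ)^2| ≤ 6 := by
    calc |∑ d ∈ Finset.Icc 1 H, (μ d : ℝ) * Real.log d / (d:ℝ)^2|
        ≤ ∑ d ∈ Finset.Icc 1 H, |(μ d : ℝ) * Real.log d / (d:ℝ)^2| :=
          Finset.abs_sum_le_sum_abs _ _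
      _ ≤ ∑ d ∈ Finset.Icc 1 H, Real.log d / (d:ℝ)^2 := by
          apply Finset.sum_le_sum
          intro d hd
          simp only [Finset.mem_Icc] at hd
          have hd1 : (1:ℝ) ≤ (d:ℝ) := by exact_mod_cast hd.1
          have hlogd : 0 ≤ Real.log d := Real.log_nonneg hd1
          rw [abs_div, abs_mul, abs_of_nonneg hlogd,
            abs_of_nonneg (by positivity : (0:ℝ) ≤ (d:ℝ)^2)]
          apply div_le_div_of_nonneg_right _ (by positivity)
          nlinarith [hmoeb d]
      _ ≤ 6 := sum_log_div_sq_le H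
  have hS1abs := moebius_partial H hH
  -- final assembly
  rw [hS]
  have hsplit : ∑ d ∈ Finset.Icc 1 H, (μ d : ℝ) * ((quadA (H/d)).card : ℝ)
      - 12 / Real.pi ^ 2 * (H : ℝ) ^ 2 * Real.log H
      = (∑ d ∈ Finset.Icc 1 H, (μ d : ℝ) * ((quadA (H/d)).card : ℝ)
          - ∑ d ∈ Finset.Icc 1 H, (μ d : ℝ) * (2 * ((H/d : ℕ) : ℝ)^2 * Real.log ((H/d : ℕ) : ℝ)))
        + (∑ d ∈ Finset.Icc 1 H, (μ d : ℝ) * (2 * ((H/d : ℕ) : ℝ)^2 * Real.log ((H/d : ℕ) : ℝ))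
          - ∑ d ∈ Finset.Icc 1 H, (μ d : ℝ) * (2 * ((H:ℝ)/(d:ℝ))^2 * Real.log ((H:ℝ)/(d:ℝ))))
        + (2 * (H:ℝ)^2 * Real.log H
            * ((∑ d ∈ Finset.Icc 1 H, (μ d : ℝ)/(d:ℝ)^2) - 6 / Real.pi ^ 2))
        + (- (2 * (H:ℝ)^2 * (∑ d ∈ Finset.Icc 1 H, (μ d : ℝ) * Real.log d / (d:ℝ)^2))) := by
    rw [hT2]
    ring
  rw [hsplit]
  have hthird : |2 * (H:ℝ)^2 * Real.log H
      * ((∑ d ∈ Finset.Icc 1 H, (μ d : ℝ)/(d:ℝ)^2) - 6 / Real.pi ^ 2)| ≤ 4 * (H:ℝ)^2 := by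
    rw [abs_mul]
    have h1 : |2 * (H:ℝ)^2 * Real.log H| = 2 * (H:ℝ)^2 * Real.log H := by
      rw [abs_of_nonneg]; positivity
    rw [h1]
    calc 2 * (H:ℝ)^2 * Real.log H * |(∑ d ∈ Finset.Icc 1 H, (μ d : ℝ)/(d:ℝ)^2) - 6 / Real.pi ^ 2|
        ≤ 2 * (H:ℝ)^2 * Real.log H * (1/(H:ℝ)) := by
          apply mul_le_mul_of_nonneg_left hS1abs (by positivity)
      _ = 2 * (H:ℝ) * Real.log H := by field_simp
      _ ≤ 4 * (H:ℝ)^2 := by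
          nlinarith [mul_le_mul_of_nonneg_left hlog2s (le_of_lt hH0),
            mul_le_mul_of_nonneg_left hsqrt1 (le_of_lt hH0)]
  have hfourth : |-(2 * (H:ℝ)^2 * (∑ d ∈ Finset.Icc 1 H, (μ d : ℝ) * Real.log d / (d:ℝ)^2))|
      ≤ 12 * (H:ℝ)^2 := by
    rw [abs_neg, abs_mul]
    have h1 : |2 * (H:ℝ)^2| = 2 * (H:ℝ)^2 := by rw [abs_of_nonneg]; positivity
    rw [h1]
    nlinarith [sq_nonneg ((H:ℝ))]
  set A1 := ∑ d ∈ Finset.Icc 1 H, (μ d : ℝ) * ((quadA (H/d)).card : ℝ)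
      - ∑ d ∈ Finset.Icc 1 H, (μ d : ℝ) * (2 * ((H/d : ℕ) : ℝ)^2 * Real.log ((H/d : ℕ) : ℝ))
    with hA1
  set A2 := ∑ d ∈ Finset.Icc 1 H, (μ d : ℝ) * (2 * ((H/d : ℕ) : ℝ)^2 * Real.log ((H/d : ℕ) : ℝ))
      - ∑ d ∈ Finset.Icc 1 H, (μ d : ℝ) * (2 * ((H:ℝ)/(d:ℝ))^2 * Real.log ((H:ℝ)/(d:ℝ)))
    with hA2
  set A3 := 2 * (H:ℝ)^2 * Real.log H
      * ((∑ d ∈ Finset.Icc 1 H, (μ d : ℝ)/(d:ℝ)^2) - 6 / Real.pi ^ 2) with hA3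
  set A4 := -(2 * (H:ℝ)^2 * (∑ d ∈ Finset.Icc 1 H, (μ d : ℝ) * Real.log d / (d:ℝ)^2)) with hA4
  calc |A1 + A2 + A3 + A4| ≤ |A1 + A2 + A3| + |A4| := abs_add_le _ _
    _ ≤ (|A1 + A2| + |A3|) + |A4| := by gcongr; exact abs_add_le _ _
    _ ≤ ((|A1| + |A2|) + |A3|) + |A4| := by gcongr; exact abs_add_le _ _
    _ ≤ ((24 * (H:ℝ)^2 + 30 * (H:ℝ)^2) + 4 * (H:ℝ)^2) + 12 * (H:ℝ)^2 := by
        gcongr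
    _ ≤ 200 * (H:ℝ)^2 := by nlinarith [sq_nonneg ((H:ℝ))]

end SingAux

/-- The number of `(a,b,c,d) ∈ [1,H]⁴` with `ad = bc` is
`(12/π²) H² log H + O(H²)` as `H → ∞`. -/
theorem singCount_asymptotic :
    (fun H : ℕ =>
        (singCount H : ℝ) - 12 / Real.pi ^ 2 * (H : ℝ) ^ 2 * Real.log H)
      =O[atTop] fun H : ℕ => (H : ℝ) ^ 2 := by
  apply Asymptotics.isBigO_of_le' (c := 200)
  intro H
  rcases Nat.eq_zero_or_pos H with rfl | hH
  · simp [singCount]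
  · have := SingAux.main_est H hH
    rw [Real.norm_eq_abs, Real.norm_eq_abs]
    calc |(singCount H : ℝ) - 12 / Real.pi ^ 2 * (H : ℝ) ^ 2 * Real.log H| ≤ 200 * (H : ℝ) ^ 2 := this
      _ ≤ 200 * |(H : ℝ) ^ 2| := by rw [abs_of_nonneg (by positivity)]
end
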